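/- arXiv:2405.07271 — 16 statements merged into one kernel-verified Lean document; each statement's English description precedes it below -/
import Mathlib

section
/- If 0 → M' → M → M'' → 0 is a short exact sequence of modules over a commutative ring R with S a multiplicative set, and both M' and M'' are S-finitely presented, then M is S-finitely presented. -/
open Function LinearMap

/-- A module `M` is `S`-finite: there is a f.g. submodule `N₀` and `s ∈ S` with `s • M ⊆ N₀`. -/
def SFiniteMod (R : Type*) [CommRing R] (S : Submonoid R)
    (M : Type*) [AddCommGroup M] [Module R M] : Prop :=
  ∃ N₀ : Submodule R M, N₀.FG ∧ ∃ s ∈ S, ∀ m : M, s • m ∈ N₀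

/-- A module `M` is `S`-finitely presented: there is an exact sequence
`0 → K → F → M → 0` with `F` finitely generated free and `K` `S`-finite. -/
def SFinitePres (R : Type*) [CommRing R] (S : Submonoid R)
    (M : Type*) [AddCommGroup M] [Module R M] : Prop :=
  ∃ (n : ℕ) (f : (Fin n → R) →ₗ[R] M), Function.Surjective f ∧
    ∃ K₀ : Submodule R (Fin n → R), K₀.FG ∧ K₀ ≤ LinearMap.ker f ∧
      ∃ s ∈ S, ∀ x ∈ LinearMap.ker f, s • x ∈ K₀

/-- An ideal `I` is `S`-finite. -/
def SFiniteIdeal (R : Type*) [CommRing R] (S : Submonoid R) (I : Ideal R) : Prop :=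
  ∃ J : Ideal R, J.FG ∧ J ≤ I ∧ ∃ s ∈ S, ∀ x ∈ I, s * x ∈ J

/-- `R` is an `S`-coherent ring: every finitely generated ideal is `S`-finitely presented. -/
def SCoherentRing (R : Type*) [CommRing R] (S : Submonoid R) : Prop :=
  ∀ I : Ideal R, I.FG → SFinitePres R S ↥I

/-- `M` is an `S`-coherent module: finitely generated and every finitely generated
submodule is `S`-finitely presented. -/
def SCoherentMod (R : Type*) [CommRing R] (S : Submonoid R)
    (M : Type*) [AddCommGroup M] [Module R M] : Prop :=
  Module.Finite R M ∧ ∀ N : Submodule R M, N.FG → SFinitePres R S ↥N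

/-- If `0 → M' → M → M'' → 0` is exact and `M'`, `M''` are S-finitely presented,
then so is `M`. -/
theorem stmt0 {R : Type*} [CommRing R] (S : Submonoid R)
    {M' M M'' : Type*} [AddCommGroup M'] [Module R M'] [AddCommGroup M] [Module R M]
    [AddCommGroup M''] [Module R M'']
    (f : M' →ₗ[R] M) (g : M →ₗ[R] M'')
    (hf : Function.Injective f) (hg : Function.Surjective g) (hfg : Function.Exact f g)
    (h1 : SFinitePres R S M') (h2 : SFinitePres R S M'') :
    SFinitePres R S M := by
  classical
  obtain ⟨n1, p1, hp1, K1, hK1fg, hK1le, s1, hs1, hs1K⟩ := h1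
  obtain ⟨n2, p2, hp2, K2, hK2fg, hK2le, s2, hs2, hs2K⟩ := h2
  set B := Pi.basisFun R (Fin n2) with hB
  choose lift hlift using hg
  set h : (Fin n2 → R) →ₗ[R] M := B.constr R fun i => lift (p2 (B i)) with hh
  have hgh : ∀ b, g (h b) = p2 b := by
    intro b
    have : g.comp h = p2 := by
      apply B.ext; intro i
      simp [hh, Module.Basis.constr_basis, hlift]
    exact LinearMap.congr_fun this b
  set q : ((Fin n1 → R) × (Fin n2 → R)) →ₗ[R] M := (f.comp p1).coprod h with hq
  have hqapp : ∀ x : (Fin n1 → R) × (Fin n2 → R), q x = f (p1 x.1) + h x.2 := by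
    intro x; simp [hq]
  have hq_surj : Function.Surjective q := by
    intro m
    obtain ⟨b, hb⟩ := hp2 (g m)
    have hmem : m - h b ∈ Set.range f := by
      rw [← hfg (m - h b)]
      simp [hgh, hb]
    obtain ⟨m', hm'⟩ := hmem
    obtain ⟨a, ha⟩ := hp1 m'
    exact ⟨(a, b), by simp [hqapp, ha, hm']⟩
  have key : ∀ b, p2 b = 0 → ∃ a, q (a, b) = 0 := by
    intro b hb
    have hmem : -(h b) ∈ Set.range f := by
      rw [← hfg (-(h b))]
      simp [hgh, hb]
    obtain ⟨m', hm'⟩ := hmem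
    obtain ⟨a, ha⟩ := hp1 m'
    exact ⟨a, by simp [hqapp, ha, hm']⟩
  set L : (Fin n2 → R) → ((Fin n1 → R) × (Fin n2 → R)) :=
    fun b => if hb : p2 b = 0 then ((key b hb).choose, b) else 0 with hL
  have hLq : ∀ b, p2 b = 0 → q (L b) = 0 := by
    intro b hb
    simp only [hL, dif_pos hb]
    exact (key b hb).choose_spec
  have hL2 : ∀ b, p2 b = 0 → (L b).2 = b := by
    intro b hb
    simp only [hL, dif_pos hb]
  obtain ⟨T, hT⟩ := hK2fg
  set Z : Submodule R ((Fin n1 → R) × (Fin n2 → R)) := Submodule.span R (L '' ↑T) with hZ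
  have hTK2 : ∀ t ∈ T, p2 t = 0 := by
    intro t ht
    have : (t : Fin n2 → R) ∈ K2 := hT ▸ Submodule.subset_span ht
    exact hK2le this
  have hZker : Z ≤ LinearMap.ker q := by
    rw [hZ, Submodule.span_le]
    rintro _ ⟨t, ht, rfl⟩
    exact hLq t (hTK2 t ht)
  have sec : ∀ c ∈ K2, ∃ z ∈ Z, z.2 = c := by
    intro c hc
    rw [← hT] at hc
    induction hc using Submodule.span_induction with
    | mem t ht =>
      exact ⟨L t, Submodule.subset_span ⟨t, ht, rfl⟩, hL2 t (hTK2 t ht)⟩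
    | zero => exact ⟨0, Submodule.zero_mem _, rfl⟩
    | add a b _ _ iha ihb =>
      obtain ⟨za, hza, hza2⟩ := iha
      obtain ⟨zb, hzb, hzb2⟩ := ihb
      exact ⟨za + zb, Submodule.add_mem _ hza hzb, by simp [hza2, hzb2]⟩
    | smul r a _ iha =>
      obtain ⟨za, hza, hza2⟩ := iha
      exact ⟨r • za, Submodule.smul_mem _ r hza, by simp [hza2]⟩
  set K₀ : Submodule R ((Fin n1 → R) × (Fin n2 → R)) :=
    (K1.map (LinearMap.inl R _ _)) ⊔ Z with hK₀
  have hK₀fg : K₀.FG := Submodule.FG.sup (hK1fg.map _) ⟨T.image L, by simp [hZ]⟩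
  have hK₀ker : K₀ ≤ LinearMap.ker q := by
    rw [hK₀, sup_le_iff]
    constructor
    · rintro _ ⟨a, ha, rfl⟩
      have : p1 a = 0 := hK1le ha
      simp [LinearMap.mem_ker, hqapp, this]
    · exact hZker
  have hmain : ∀ x ∈ LinearMap.ker q, (s1 * s2) • x ∈ K₀ := by
    intro x hx
    have hqx : q x = 0 := hx
    have hx2 : p2 x.2 = 0 := by
      have h0 := congrArg g hqx
      rw [hqapp] at h0
      simpa [hgh, (hfg (f (p1 x.1))).mpr ⟨p1 x.1, rfl⟩] using h0
    obtain ⟨z, hz, hz2⟩ := sec (s2 • x.2) (hs2K x.2 hx2)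
    set y := s2 • x - z with hy
    have hqz : q z = 0 := hZker hz
    have hyker : q y = 0 := by
      rw [hy, map_sub, map_smul, hqx, hqz, smul_zero, sub_zero]
    have hy2 : y.2 = 0 := by
      simp [hy, hz2]
    have hy1 : p1 y.1 = 0 := by
      apply hf
      rw [map_zero]
      have := hqapp y
      rw [hyker, hy2, map_zero, add_zero] at this
      exact this.symm
    have hy1K : s1 • y.1 ∈ K1 := hs1K y.1 hy1
    have hsy : s1 • y = LinearMap.inl R (Fin n1 → R) (Fin n2 → R) (s1 • y.1) := by
      ext
      · simp
      · simp [hy2]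
    have hm1 : s1 • y ∈ K₀ := by
      apply Submodule.mem_sup_left
      rw [hsy]
      exact ⟨s1 • y.1, hy1K, rfl⟩
    have hm2 : s1 • z ∈ K₀ := Submodule.mem_sup_right (Z.smul_mem s1 hz)
    have : (s1 * s2) • x = s1 • y + s1 • z := by
      rw [hy, smul_sub, mul_smul]
      abel
    rw [this]
    exact Submodule.add_mem _ hm1 hm2
  set e : (Fin (n1 + n2) → R) ≃ₗ[R] ((Fin n1 → R) × (Fin n2 → R)) :=
    (LinearEquiv.funCongrLeft R R finSumFinEquiv).trans
      (LinearEquiv.sumArrowLequivProdArrow (Fin n1) (Fin n2) R R) with he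
  refine ⟨n1 + n2, q ∘ₗ e.toLinearMap, hq_surj.comp e.surjective,
    K₀.map e.symm.toLinearMap, hK₀fg.map _, ?_, s1 * s2, S.mul_mem hs1 hs2, ?_⟩
  · rintro _ ⟨k, hk, rfl⟩
    have hk0 : q k = 0 := hK₀ker hk
    simp [LinearMap.mem_ker, hk0]
  · intro x hx
    have hx0 : q (e x) = 0 := hx
    have hmem := hmain (e x) hx0
    refine ⟨(s1 * s2) • (e x), hmem, ?_⟩
    rw [map_smul]
    simp
end

section
/- If 0 → M' → M → M'' → 0 is a short exact sequence of R-modules, M' is S-finite, and M is S-finitely presented, then M'' is S-finitely presented. -/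
open Function LinearMap

/-- If `0 → M' → M → M'' → 0` is exact, `M'` is S-finite and `M` is S-finitely
presented, then `M''` is S-finitely presented. -/
theorem stmt1 {R : Type*} [CommRing R] (S : Submonoid R)
    {M' M M'' : Type*} [AddCommGroup M'] [Module R M'] [AddCommGroup M] [Module R M]
    [AddCommGroup M''] [Module R M'']
    (f : M' →ₗ[R] M) (g : M →ₗ[R] M'')
    (hf : Function.Injective f) (hg : Function.Surjective g) (hfg : Function.Exact f g)
    (h1 : SFiniteMod R S M') (h2 : SFinitePres R S M) :
    SFinitePres R S M'' := by
  obtain ⟨N₀, hN₀fg, t, htS, htN⟩ := h1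
  obtain ⟨n, π, hπ, K₀, hK₀fg, hK₀le, s, hsS, hs⟩ := h2
  have hlift : ∀ m' : M', ∃ x : Fin n → R, π x = f m' := fun m' => hπ (f m')
  choose lift hlift using hlift
  obtain ⟨T, hT⟩ := hN₀fg
  set L : Submodule R (Fin n → R) := Submodule.span R (lift '' (T : Set M')) with hL
  have hmapL : Submodule.map π L = Submodule.map f N₀ := by
    rw [hL, Submodule.map_span, ← hT, Submodule.map_span]
    congr 1
    rw [← Set.image_comp]
    exact Set.image_congr fun x _ => hlift x
  refine ⟨n, g ∘ₗ π, hg.comp hπ, K₀ ⊔ L, hK₀fg.sup (Submodule.fg_span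
    ((T.finite_toSet).image lift)), ?_, s * t, S.mul_mem hsS htS, ?_⟩
  · refine sup_le (fun x hx => ?_) (Submodule.span_le.2 ?_)
    · have : π x = 0 := hK₀le hx
      simp [LinearMap.mem_ker, this]
    · rintro _ ⟨m', _, rfl⟩
      have : π (lift m') = f m' := hlift m'
      simp [LinearMap.mem_ker, this, hfg.apply_apply_eq_zero]
  · intro x hx
    have hgx : g (π x) = 0 := hx
    obtain ⟨m', hm'⟩ := (hfg (π x)).mp hgx
    have h1 : f (t • m') ∈ Submodule.map π L := by
      rw [hmapL]
      exact Submodule.mem_map_of_mem (hT ▸ htN m')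
    obtain ⟨l, hl, hπl⟩ := h1
    have hker : t • x - l ∈ LinearMap.ker π := by
      rw [LinearMap.mem_ker, map_sub, map_smul, hπl, map_smul, hm', sub_self]
    have hkey : s • (t • x - l) ∈ K₀ := hs _ hker
    have : (s * t) • x = s • (t • x - l) + s • l := by
      rw [smul_sub, mul_smul]; abel
    rw [this]
    exact Submodule.add_mem _ (Submodule.mem_sup_left hkey)
      (Submodule.mem_sup_right (Submodule.smul_mem _ _ hl))
end

section
/- If 0 → M' → M → M'' → 0 is a short exact sequence of R-modules, M'' is S-finitely presented, and M is S-finite, then M' is S-finite. -/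
open Function LinearMap

/-- If `0 → M' → M → M'' → 0` is exact, `M''` is S-finitely presented and `M` is
S-finite, then `M'` is S-finite. -/
theorem stmt2 {R : Type*} [CommRing R] (S : Submonoid R)
    {M' M M'' : Type*} [AddCommGroup M'] [Module R M'] [AddCommGroup M] [Module R M]
    [AddCommGroup M''] [Module R M'']
    (f : M' →ₗ[R] M) (g : M →ₗ[R] M'')
    (hf : Function.Injective f) (hg : Function.Surjective g) (hfg : Function.Exact f g)
    (h1 : SFinitePres R S M'') (h2 : SFiniteMod R S M) :
    SFiniteMod R S M' := by
  obtain ⟨n, π, hπ, K₀, hK₀fg, hK₀ker, s₁, hs₁S, hs₁⟩ := h1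
  obtain ⟨N₀, hN₀fg, s₂, hs₂S, hs₂⟩ := h2
  obtain ⟨k, mgen, hm⟩ := Submodule.fg_iff_exists_fin_generating_family.1 hN₀fg
  obtain ⟨t, κ, hκ⟩ := Submodule.fg_iff_exists_fin_generating_family.1 hK₀fg
  choose u hu using hg
  set φ : (Fin n → R) →ₗ[R] M :=
    (Pi.basisFun R (Fin n)).constr R (fun i => u (π (Pi.basisFun R (Fin n) i))) with hφdef
  have hφ : ∀ x, g (φ x) = π x := by
    have h : g.comp φ = π := by
      apply (Pi.basisFun R (Fin n)).ext
      intro i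
      rw [LinearMap.comp_apply, hφdef, Module.Basis.constr_basis, hu]
    intro x
    exact congrFun (congrArg DFunLike.coe h) x
  choose x hx using fun j => hπ (g (mgen j))
  have hκmem : ∀ i, κ i ∈ K₀ := fun i => hκ ▸ Submodule.subset_span (Set.mem_range_self i)
  choose μ hμ using fun j => (hfg (mgen j - φ (x j))).mp
    (by simp [hφ, hx])
  choose σ hσ using fun i => (hfg (φ (κ i))).mp
    (by rw [hφ]; exact LinearMap.mem_ker.mp (hK₀ker (hκmem i)))
  refine ⟨Submodule.span R (Set.range (Sum.elim μ σ)),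
    Submodule.fg_span (Set.finite_range _), s₁ * s₂, S.mul_mem hs₁S hs₂S, ?_⟩
  intro m'
  have h0 : g (f m') = 0 := hfg.apply_apply_eq_zero m'
  have hmem : s₂ • f m' ∈ Submodule.span R (Set.range mgen) := by
    rw [hm]; exact hs₂ _
  obtain ⟨a, ha⟩ := (Submodule.mem_span_range_iff_exists_fun R).mp hmem
  set w : Fin n → R := ∑ j, a j • x j with hwdef
  have hw : w ∈ LinearMap.ker π := by
    rw [LinearMap.mem_ker, hwdef, map_sum]
    simp only [map_smul, hx]
    calc (∑ j, a j • g (mgen j)) = g (∑ j, a j • mgen j) := by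
          rw [map_sum]; simp only [map_smul]
      _ = g (s₂ • f m') := by rw [ha]
      _ = 0 := by rw [map_smul, h0, smul_zero]
  have hmemK : s₁ • w ∈ Submodule.span R (Set.range κ) := by
    rw [hκ]; exact hs₁ w hw
  obtain ⟨b, hb⟩ := (Submodule.mem_span_range_iff_exists_fun R).mp hmemK
  have key : f ((s₁ * s₂) • m') = f ((∑ j, (s₁ * a j) • μ j) + ∑ i, b i • σ i) := by
    rw [map_add, map_sum, map_sum]
    simp only [map_smul, hμ, hσ]
    have e1 : (∑ i, b i • φ (κ i)) = φ (s₁ • w) := by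
      rw [← hb, map_sum]; simp only [map_smul]
    rw [e1]
    have e2 : (∑ j, (s₁ * a j) • (mgen j - φ (x j)))
        = s₁ • (∑ j, a j • mgen j) - φ (s₁ • w) := by
      rw [hwdef, map_smul, map_sum, Finset.smul_sum, Finset.smul_sum,
        ← Finset.sum_sub_distrib]
      refine Finset.sum_congr rfl fun j _ => ?_
      simp [smul_sub, mul_smul]
    rw [e2, ha]
    simp [mul_smul, smul_comm s₁ s₂]
  have heq := hf key
  rw [heq]
  refine Submodule.add_mem _ ?_ ?_
  · exact Submodule.sum_mem _ fun j _ => Submodule.smul_mem _ _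
      (Submodule.subset_span ⟨Sum.inl j, rfl⟩)
  · exact Submodule.sum_mem _ fun i _ => Submodule.smul_mem _ _
      (Submodule.subset_span ⟨Sum.inr i, rfl⟩)
end

section
/- If R is an S-coherent ring, then the intersection of two S-finite ideals of R is S-finite. -/
open Function LinearMap

/-- Kernel of any surjection from f.g. free onto an S-finitely presented module is S-finite. -/
theorem ker_sfinite {R : Type*} [CommRing R] (S : Submonoid R)
    {M : Type*} [AddCommGroup M] [Module R M] (hM : SFinitePres R S M)
    {N : ℕ} (φ : (Fin N → R) →ₗ[R] M) (hφ : Function.Surjective φ) :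
    ∃ K : Submodule R (Fin N → R), K.FG ∧ K ≤ LinearMap.ker φ ∧
      ∃ s ∈ S, ∀ x ∈ LinearMap.ker φ, s • x ∈ K := by
  obtain ⟨n, f, hf, K₀, hK₀fg, hK₀le, s, hsS, hs⟩ := hM
  -- lift φ through f
  choose α' hα' using fun i => hf (φ (Pi.basisFun R (Fin N) i))
  choose β' hβ' using fun i => hφ (f (Pi.basisFun R (Fin n) i))
  set α : (Fin N → R) →ₗ[R] (Fin n → R) := (Pi.basisFun R (Fin N)).constr ℕ α'
  set β : (Fin n → R) →ₗ[R] (Fin N → R) := (Pi.basisFun R (Fin n)).constr ℕ β'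
  have hfα : f ∘ₗ α = φ := by
    apply (Pi.basisFun R (Fin N)).ext
    intro i
    simp [α, hα' i, Pi.single_apply, ite_smul]
  have hφβ : φ ∘ₗ β = f := by
    apply (Pi.basisFun R (Fin n)).ext
    intro i
    simp [β, hβ' i, Pi.single_apply, ite_smul]
  have hfα' : ∀ x, f (α x) = φ x := fun x => congrFun (congrArg DFunLike.coe hfα) x
  have hφβ' : ∀ x, φ (β x) = f x := fun x => congrFun (congrArg DFunLike.coe hφβ) x
  set g : (Fin N → R) →ₗ[R] (Fin N → R) := LinearMap.id - β ∘ₗ α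
  refine ⟨LinearMap.range g ⊔ K₀.map β, ?_, ?_, s, hsS, ?_⟩
  · refine Submodule.FG.sup ?_ (hK₀fg.map β)
    have ht : (⊤ : Submodule R (Fin N → R)).FG := Module.Finite.fg_top
    have := ht.map g
    rwa [Submodule.map_top] at this
  · apply sup_le
    · rintro _ ⟨x, rfl⟩
      simp only [LinearMap.mem_ker, g, LinearMap.sub_apply, LinearMap.id_apply,
        LinearMap.coe_comp, Function.comp_apply, map_sub, hφβ', hfα']
      simp
    · rintro _ ⟨k, hk, rfl⟩
      have : f k = 0 := hK₀le hk
      simp [LinearMap.mem_ker, hφβ', this]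
  · intro x hx
    have hαx : α x ∈ LinearMap.ker f := by
      rw [LinearMap.mem_ker, hfα', hx]
    have h1 : s • x = g (s • x) + β (s • α x) := by
      simp only [g, LinearMap.sub_apply, LinearMap.id_apply, LinearMap.coe_comp,
        Function.comp_apply, map_smul]
      module
    rw [h1]
    exact Submodule.add_mem _ (Submodule.mem_sup_left ⟨s • x, rfl⟩)
      (Submodule.mem_sup_right ⟨s • α x, hs _ hαx, rfl⟩)

theorem inter_fg_sfinite {R : Type*} [CommRing R] (S : Submonoid R)
    (h : SCoherentRing R S) (I₀ J₀ : Ideal R) (hI₀ : I₀.FG) (hJ₀ : J₀.FG) :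
    SFiniteIdeal R S (I₀ ⊓ J₀) := by
  obtain ⟨m, a, ha⟩ := Submodule.fg_iff_exists_fin_generating_family.mp hI₀
  obtain ⟨n, b, hb⟩ := Submodule.fg_iff_exists_fin_generating_family.mp hJ₀
  have ha' : ∀ i, a i ∈ I₀ := fun i => ha ▸ Submodule.subset_span ⟨i, rfl⟩
  have hb' : ∀ j, b j ∈ J₀ := fun j => hb ▸ Submodule.subset_span ⟨j, rfl⟩
  set v : Fin (m + n) → R := Fin.append a (fun j => -(b j)) with hv
  set w : Fin (m + n) → R := Fin.append a (fun _ => (0 : R)) with hw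
  set φ0 : (Fin (m + n) → R) →ₗ[R] R := Fintype.linearCombination R v with hφ0
  set ψ : (Fin (m + n) → R) →ₗ[R] R := Fintype.linearCombination R w with hψ
  set T : Ideal R := LinearMap.range φ0 with hT
  have hTfg : T.FG := by
    rw [hT, hφ0, Fintype.range_linearCombination]
    exact Submodule.fg_span (Set.finite_range v)
  have hpres := h T hTfg
  obtain ⟨K, hKfg, hKle, s, hsS, hsK⟩ :=
    ker_sfinite S hpres φ0.rangeRestrict φ0.surjective_rangeRestrict
  rw [LinearMap.ker_rangeRestrict] at hKle hsK
  -- computations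
  have hsplit : ∀ x : Fin (m + n) → R,
      φ0 x = ψ x - ∑ j, x (Fin.natAdd m j) * b j := by
    intro x
    simp only [hφ0, hψ, Fintype.linearCombination_apply, Fin.sum_univ_add, hv, hw,
      Fin.append_left, Fin.append_right, smul_eq_mul, mul_neg, mul_zero,
      Finset.sum_neg_distrib, Finset.sum_const_zero, add_zero, sub_eq_add_neg]
  have hψI : ∀ x : Fin (m + n) → R, ψ x ∈ I₀ := by
    intro x
    simp only [hψ, Fintype.linearCombination_apply, Fin.sum_univ_add, hw,
      Fin.append_left, Fin.append_right, smul_eq_mul, mul_zero, Finset.sum_const_zero, add_zero]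
    exact Ideal.sum_mem _ fun i _ => I₀.mul_mem_left _ (ha' i)
  have hC1 : ∀ x ∈ LinearMap.ker φ0, ψ x ∈ I₀ ⊓ J₀ := by
    intro x hx
    refine ⟨hψI x, ?_⟩
    have := hsplit x
    rw [LinearMap.mem_ker.mp hx] at this
    have hψx : ψ x = ∑ j, x (Fin.natAdd m j) * b j := sub_eq_zero.mp this.symm
    rw [hψx]
    exact Ideal.sum_mem _ fun j _ => J₀.mul_mem_left _ (hb' j)
  have hC2 : ∀ c ∈ I₀ ⊓ J₀, ∃ x ∈ LinearMap.ker φ0, ψ x = c := by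
    rintro c ⟨hcI, hcJ⟩
    rw [← ha] at hcI
    rw [← hb] at hcJ
    obtain ⟨y, hy⟩ := (Submodule.mem_span_range_iff_exists_fun R).mp hcI
    obtain ⟨z, hz⟩ := (Submodule.mem_span_range_iff_exists_fun R).mp hcJ
    refine ⟨Fin.append y z, ?_, ?_⟩
    · rw [LinearMap.mem_ker, hsplit]
      simp only [hψ, Fintype.linearCombination_apply, Fin.sum_univ_add, hw,
        Fin.append_left, Fin.append_right, smul_eq_mul, mul_zero, Finset.sum_const_zero, add_zero]
      simp only [smul_eq_mul] at hy hz
      rw [hy, hz]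
      ring
    · simp only [hψ, Fintype.linearCombination_apply, Fin.sum_univ_add, hw,
        Fin.append_left, Fin.append_right, smul_eq_mul, mul_zero, Finset.sum_const_zero, add_zero]
      simpa [smul_eq_mul] using hy
  refine ⟨Submodule.map ψ K, hKfg.map ψ, ?_, s, hsS, ?_⟩
  · rintro _ ⟨x, hx, rfl⟩
    exact hC1 x (hKle hx)
  · intro c hc
    obtain ⟨x, hx, rfl⟩ := hC2 c hc
    have : s • x ∈ K := hsK x hx
    exact ⟨s • x, this, by rw [map_smul]; simp [smul_eq_mul]⟩


/-- In an S-coherent ring, the intersection of two S-finite ideals is S-finite. -/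
theorem stmt4 {R : Type*} [CommRing R] (S : Submonoid R)
    (h : SCoherentRing R S) (I J : Ideal R)
    (hI : SFiniteIdeal R S I) (hJ : SFiniteIdeal R S J) :
    SFiniteIdeal R S (I ⊓ J) := by
  obtain ⟨I₀, hI₀fg, hI₀le, s₁, hs₁S, hs₁⟩ := hI
  obtain ⟨J₀, hJ₀fg, hJ₀le, s₂, hs₂S, hs₂⟩ := hJ
  obtain ⟨K, hKfg, hKle, s₃, hs₃S, hs₃⟩ := inter_fg_sfinite S h I₀ J₀ hI₀fg hJ₀fg
  refine ⟨K, hKfg, hKle.trans (inf_le_inf hI₀le hJ₀le), s₃ * (s₁ * s₂),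
    S.mul_mem hs₃S (S.mul_mem hs₁S hs₂S), ?_⟩
  intro x hx
  have h1 : s₁ * s₂ * x ∈ I₀ ⊓ J₀ := by
    constructor
    · have := hs₁ x hx.1
      have : s₂ * (s₁ * x) ∈ I₀ := I₀.mul_mem_left _ this
      simpa [mul_assoc, mul_left_comm, mul_comm] using this
    · have := hs₂ x hx.2
      have : s₁ * (s₂ * x) ∈ J₀ := J₀.mul_mem_left _ this
      simpa [mul_assoc] using this
  have := hs₃ _ h1
  simpa [mul_assoc] using this
end

section
/- If R is an S-coherent ring, then the intersection of any finite family of S-finite ideals of R is S-finite. -/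
open Function LinearMap

/-- Kernel transfer between two finite free presentations. -/
lemma ker_transfer' {R : Type*} [CommRing R]
    {M : Type*} [AddCommGroup M] [Module R M]
    {n m : ℕ} (f : (Fin n → R) →ₗ[R] M) (hf : Surjective f)
    (g : (Fin m → R) →ₗ[R] M) (hg : Surjective g)
    (K₀ : Submodule R (Fin n → R)) (hK₀ : K₀.FG) (hK₀le : K₀ ≤ ker f)
    {s : R} (hs : ∀ x ∈ ker f, s • x ∈ K₀) :
    ∃ K₁ : Submodule R (Fin m → R), K₁.FG ∧ K₁ ≤ ker g ∧ ∀ x ∈ ker g, s • x ∈ K₁ := by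
  obtain ⟨φ, hφ⟩ := Module.projective_lifting_property f g hf
  obtain ⟨ψ, hψ⟩ := Module.projective_lifting_property g f hg
  set e : (Fin m → R) →ₗ[R] (Fin m → R) := LinearMap.id - ψ.comp φ with he
  have hge : ∀ x, g (e x) = 0 := by
    intro x
    have h1 : f (φ x) = g x := congrFun (congrArg DFunLike.coe hφ) x
    have h2 : g (ψ (φ x)) = f (φ x) := congrFun (congrArg DFunLike.coe hψ) (φ x)
    simp [he, h2, h1]
  refine ⟨LinearMap.range e ⊔ K₀.map ψ, ?_, ?_, ?_⟩
  · refine Submodule.FG.sup ?_ (hK₀.map ψ)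
    rw [← Submodule.map_top]
    exact Submodule.FG.map e (Module.Finite.fg_top (R := R) (M := Fin m → R))
  · refine sup_le ?_ ?_
    · rintro x ⟨y, rfl⟩
      exact hge y
    · rintro x ⟨k, hk, rfl⟩
      have h3 : f k = 0 := hK₀le hk
      have h2 : g (ψ k) = f k := congrFun (congrArg DFunLike.coe hψ) k
      simp [mem_ker, h2, h3]
  · intro x hx
    have hφx : φ x ∈ ker f := by
      have h1 : f (φ x) = g x := congrFun (congrArg DFunLike.coe hφ) x
      simp [mem_ker, h1, mem_ker.mp hx]
    have hdecomp : s • x = e (s • x) + ψ (s • φ x) := by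
      simp [he, map_smul, smul_sub]
    rw [hdecomp]
    exact Submodule.add_mem _
      (Submodule.mem_sup_left ⟨s • x, rfl⟩)
      (Submodule.mem_sup_right ⟨s • φ x, hs _ hφx, rfl⟩)

/-- In an S-coherent ring, the intersection of two f.g. ideals is S-finite. -/
lemma inf_fg_sfinite' {R : Type*} [CommRing R] (S : Submonoid R)
    (h : SCoherentRing R S)
    (J L : Ideal R) (hJ : J.FG) (hL : L.FG) :
    SFiniteIdeal R S (J ⊓ L) := by
  obtain ⟨p, a, ha⟩ := Submodule.fg_iff_exists_fin_generating_family.mp hJ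
  obtain ⟨q, b, hb⟩ := Submodule.fg_iff_exists_fin_generating_family.mp hL
  set v : Fin (p + q) → R := Fin.append a (fun j => -(b j)) with hv
  set g₀ : (Fin (p + q) → R) →ₗ[R] R := Fintype.linearCombination R v with hg₀
  -- splitting of g₀ as difference
  have hg₀x : ∀ x : Fin (p + q) → R,
      g₀ x = (∑ i, x (Fin.castAdd q i) * a i) - (∑ j, x (Fin.natAdd p j) * b j) := by
    intro x
    rw [hg₀, Fintype.linearCombination_apply, Fin.sum_univ_add]
    simp [hv, Fin.append_left, Fin.append_right, mul_neg, Finset.sum_neg_distrib,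
      sub_eq_add_neg]
  have hmemJL : ∀ x : Fin (p + q) → R, g₀ x ∈ J ⊔ L := by
    intro x
    rw [hg₀x]
    refine Submodule.sub_mem _ (Submodule.mem_sup_left ?_) (Submodule.mem_sup_right ?_)
    · rw [← ha]
      exact Submodule.sum_mem _ fun i _ => Submodule.smul_mem _ _ (Submodule.subset_span ⟨i, rfl⟩)
    · rw [← hb]
      exact Submodule.sum_mem _ fun j _ => Submodule.smul_mem _ _ (Submodule.subset_span ⟨j, rfl⟩)
  set g : (Fin (p + q) → R) →ₗ[R] ↥(J ⊔ L) := g₀.codRestrict (J ⊔ L) hmemJL with hgdef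
  have hker : ∀ x, x ∈ ker g ↔ g₀ x = 0 := by
    intro x
    rw [mem_ker, hgdef]
    constructor
    · intro hx
      have := congrArg Subtype.val hx
      simpa [LinearMap.codRestrict_apply] using this
    · intro hx
      ext
      simpa [LinearMap.codRestrict_apply] using hx
  -- surjectivity of g
  have hgsurj : Surjective g := by
    rintro ⟨c, hc⟩
    rw [Submodule.mem_sup] at hc
    obtain ⟨cJ, hcJ, cL, hcL, rfl⟩ := hc
    rw [← ha, Submodule.mem_span_range_iff_exists_fun] at hcJ
    rw [← hb, Submodule.mem_span_range_iff_exists_fun] at hcL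
    obtain ⟨xa, hxa⟩ := hcJ
    obtain ⟨xb, hxb⟩ := hcL
    refine ⟨Fin.append xa (fun j => -(xb j)), ?_⟩
    ext
    rw [hgdef]
    simp only [LinearMap.codRestrict_apply]
    rw [hg₀x]
    simp only [Fin.append_left, Fin.append_right]
    rw [← hxa] at *
    rw [← hxb]
    simp [smul_eq_mul, neg_mul, Finset.sum_neg_distrib]
  -- get S-finite presentation of J ⊔ L
  obtain ⟨n, f, hf, K₀, hK₀fg, hK₀le, s, hsS, hs⟩ := h (J ⊔ L) (Submodule.FG.sup hJ hL)
  obtain ⟨K₁, hK₁fg, hK₁le, hK₁⟩ := ker_transfer' f hf g hgsurj K₀ hK₀fg hK₀le hs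
  -- the map picking out the J-part
  set h' : (Fin (p + q) → R) →ₗ[R] R :=
    (Fintype.linearCombination R a).comp (LinearMap.funLeft R R (Fin.castAdd q)) with hh'
  have hh'x : ∀ x : Fin (p + q) → R, h' x = ∑ i, x (Fin.castAdd q i) * a i := by
    intro x
    rw [hh']
    simp [Fintype.linearCombination_apply, LinearMap.funLeft_apply, smul_eq_mul]
  have himg : ∀ x ∈ ker g, h' x ∈ J ⊓ L := by
    intro x hx
    rw [hker] at hx
    constructor
    · rw [hh'x, ← ha]
      exact Submodule.sum_mem _ fun i _ => Submodule.smul_mem _ _ (Submodule.subset_span ⟨i, rfl⟩)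
    · have : h' x = ∑ j, x (Fin.natAdd p j) * b j := by
        have := hg₀x x
        rw [hx] at this
        rw [hh'x]
        linear_combination -this
      rw [this, ← hb]
      exact Submodule.sum_mem _ fun j _ => Submodule.smul_mem _ _ (Submodule.subset_span ⟨j, rfl⟩)
  refine ⟨K₁.map h', hK₁fg.map h', ?_, s, hsS, ?_⟩
  · rintro x ⟨k, hk, rfl⟩
    exact himg k (hK₁le hk)
  · intro c hc
    obtain ⟨hcJ, hcL⟩ := Submodule.mem_inf.mp hc
    rw [← ha, Submodule.mem_span_range_iff_exists_fun] at hcJ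
    rw [← hb, Submodule.mem_span_range_iff_exists_fun] at hcL
    obtain ⟨xa, hxa⟩ := hcJ
    obtain ⟨xb, hxb⟩ := hcL
    set x : Fin (p + q) → R := Fin.append xa xb with hx
    have hxker : x ∈ ker g := by
      rw [hker, hg₀x]
      simp only [hx, Fin.append_left, Fin.append_right]
      rw [show (∑ i, xa i * a i) = c by simpa [smul_eq_mul] using hxa,
        show (∑ j, xb j * b j) = c by simpa [smul_eq_mul] using hxb]
      ring
    have := hK₁ x hxker
    refine Submodule.mem_map.mpr ⟨s • x, this, ?_⟩
    rw [map_smul, hh'x]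
    simp only [hx, Fin.append_left]
    rw [show (∑ i, xa i * a i) = c by simpa [smul_eq_mul] using hxa]
    simp [smul_eq_mul]

/-- In an S-coherent ring, the intersection of any finite family of S-finite ideals
is S-finite. -/
theorem stmt5 {R : Type*} [CommRing R] (S : Submonoid R)
    (h : SCoherentRing R S) {ι : Type*} [Fintype ι] (I : ι → Ideal R)
    (hI : ∀ i, SFiniteIdeal R S (I i)) :
    SFiniteIdeal R S (⨅ i, I i) := by
  have hpair : ∀ I₁ I₂ : Ideal R, SFiniteIdeal R S I₁ → SFiniteIdeal R S I₂ →
      SFiniteIdeal R S (I₁ ⊓ I₂) := by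
    intro I₁ I₂ ⟨J, hJfg, hJle, sI, hsI, hsIJ⟩ ⟨L, hLfg, hLle, sK, hsK, hsKL⟩
    obtain ⟨J', hJ'fg, hJ'le, t, htS, ht⟩ := inf_fg_sfinite' S h J L hJfg hLfg
    refine ⟨J', hJ'fg, hJ'le.trans (inf_le_inf hJle hLle), t * sI * sK,
      S.mul_mem (S.mul_mem htS hsI) hsK, ?_⟩
    intro x hx
    obtain ⟨hx1, hx2⟩ := Submodule.mem_inf.mp hx
    have hmem : sI * sK * x ∈ J ⊓ L := by
      refine Submodule.mem_inf.mpr ⟨?_, ?_⟩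
      · have := hsIJ x hx1
        have h2 : sI * sK * x = sK * (sI * x) := by ring
        rw [h2]
        exact Ideal.mul_mem_left _ _ this
      · have := hsKL x hx2
        have h2 : sI * sK * x = sI * (sK * x) := by ring
        rw [h2]
        exact Ideal.mul_mem_left _ _ this
    have := ht _ hmem
    have h3 : t * sI * sK * x = t * (sI * sK * x) := by ring
    rw [h3]
    exact this
  have htop : SFiniteIdeal R S (⊤ : Ideal R) :=
    ⟨⊤, ⟨{1}, by simp⟩, le_rfl, 1, S.one_mem, fun x _ => Submodule.mem_top⟩
  classical
  have hfin : ∀ t : Finset ι, SFiniteIdeal R S (⨅ i ∈ t, I i) := by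
    intro t
    induction t using Finset.induction_on with
    | empty => simpa using htop
    | insert _ _ hnotmem ih =>
        rw [Finset.iInf_insert]
        exact hpair _ _ (hI _) ih
  have : (⨅ i, I i) = ⨅ i ∈ Finset.univ, I i := by simp
  rw [this]
  exact hfin Finset.univ
end

section
/- If R is an S-coherent ring and x = (x₁,…,xₙ) ∈ Rⁿ, then the annihilator (0 :_R x) = ⋂ᵢ (0 :_R xᵢ) is an S-finite ideal of R. -/
open Function LinearMap

section Aux

variable {R : Type*} [CommRing R] (S : Submonoid R)

/-- Schanuel-type comparison: if `M` is `S`-finitely presented, then the kernel of any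
surjection from a finite free module onto `M` is `S`-finite. -/
lemma sfin_ker_of_sfinitePres {M : Type*} [AddCommGroup M] [Module R M] {k : ℕ}
    (g : (Fin k → R) →ₗ[R] M) (hg : Function.Surjective g) (hM : SFinitePres R S M) :
    ∃ N₀ : Submodule R (Fin k → R), N₀.FG ∧ N₀ ≤ LinearMap.ker g ∧
      ∃ s ∈ S, ∀ y ∈ LinearMap.ker g, s • y ∈ N₀ := by
  obtain ⟨m, f, hf, K₀, hK₀fg, hK₀le, s, hsS, hsK⟩ := hM
  -- lift `g` through `f` and `f` through `g`
  choose u hu using fun i : Fin k => hf (g (Pi.single i 1))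
  choose v hv using fun j : Fin m => hg (f (Pi.single j 1))
  set φ : (Fin k → R) →ₗ[R] (Fin m → R) := Fintype.linearCombination R u with hφ
  set ψ : (Fin m → R) →ₗ[R] (Fin k → R) := Fintype.linearCombination R v with hψ
  have hfφ : f ∘ₗ φ = g := by
    apply Module.Basis.ext (Pi.basisFun R (Fin k))
    intro i
    simp [hφ, Fintype.linearCombination_apply, Pi.single_apply, hu]
  have hgψ : g ∘ₗ ψ = f := by
    apply Module.Basis.ext (Pi.basisFun R (Fin m))
    intro j
    simp [hψ, Fintype.linearCombination_apply, Pi.single_apply, hv]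
  set θ : (Fin k → R) →ₗ[R] (Fin k → R) := ψ ∘ₗ φ - LinearMap.id with hθ
  have hgθ : ∀ y, g (θ y) = 0 := by
    intro y
    have h1 : g (ψ (φ y)) = f (φ y) := congrFun (congrArg DFunLike.coe hgψ) (φ y)
    have h2 : f (φ y) = g y := congrFun (congrArg DFunLike.coe hfφ) y
    simp [hθ, map_sub, h1, h2]
  refine ⟨K₀.map ψ ⊔ LinearMap.range θ, ?_, ?_, s, hsS, ?_⟩
  · exact Submodule.FG.sup (hK₀fg.map ψ)
      (by rw [← Submodule.map_top]; exact Submodule.FG.map θ Module.Finite.fg_top)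
  · refine sup_le ?_ ?_
    · rintro _ ⟨z, hz, rfl⟩
      have : g (ψ z) = f z := congrFun (congrArg DFunLike.coe hgψ) z
      have hz' : f z = 0 := LinearMap.mem_ker.mp (hK₀le hz)
      simp [LinearMap.mem_ker, this, hz']
    · rintro _ ⟨z, rfl⟩
      simpa [LinearMap.mem_ker] using hgθ z
  · intro y hy
    have hφy : φ y ∈ LinearMap.ker f := by
      have : f (φ y) = g y := congrFun (congrArg DFunLike.coe hfφ) y
      simp [LinearMap.mem_ker, this, (LinearMap.mem_ker.mp hy)]
    have h1 : ψ (s • φ y) ∈ K₀.map ψ := Submodule.mem_map_of_mem (hsK _ hφy)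
    have h2 : θ (s • y) ∈ LinearMap.range θ := LinearMap.mem_range_self θ _
    have key : s • y = ψ (s • φ y) - θ (s • y) := by
      simp only [hθ, LinearMap.sub_apply, LinearMap.comp_apply, LinearMap.id_apply,
        map_smul, smul_sub]
      abel
    rw [key]
    exact Submodule.sub_mem _ (Submodule.mem_sup_left h1) (Submodule.mem_sup_right h2)

/-- In an `S`-coherent ring, the syzygy module of any finite family is `S`-finite. -/
lemma sfin_syzygies (h : SCoherentRing R S) {k : ℕ} (b : Fin k → R) :
    ∃ N₀ : Submodule R (Fin k → R), N₀.FG ∧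
      N₀ ≤ LinearMap.ker (Fintype.linearCombination R b) ∧
      ∃ s ∈ S, ∀ y ∈ LinearMap.ker (Fintype.linearCombination R b), s • y ∈ N₀ := by
  set I : Ideal R := Ideal.span (Set.range b) with hI
  have hIfg : I.FG := ⟨(Set.finite_range b).toFinset, by
    rw [Set.Finite.coe_toFinset]⟩
  have hmem : ∀ y : Fin k → R, Fintype.linearCombination R b y ∈ I := by
    intro y
    rw [hI, Fintype.linearCombination_apply]
    exact Submodule.sum_mem _ fun i _ =>
      Submodule.smul_mem _ _ (Ideal.subset_span ⟨i, rfl⟩)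
  set g : (Fin k → R) →ₗ[R] ↥I := (Fintype.linearCombination R b).codRestrict I hmem with hg
  have hgsurj : Function.Surjective g := by
    rintro ⟨z, hz⟩
    obtain ⟨c, hc⟩ := (Submodule.mem_span_range_iff_exists_fun R).mp hz
    exact ⟨c, Subtype.ext (by simpa [hg, Fintype.linearCombination_apply] using hc)⟩
  have hker : LinearMap.ker g = LinearMap.ker (Fintype.linearCombination R b) :=
    LinearMap.ker_codRestrict I _ hmem
  obtain ⟨N₀, hfg, hle, s, hsS, hs⟩ := sfin_ker_of_sfinitePres S g hgsurj (h I hIfg)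
  exact ⟨N₀, hfg, hker ▸ hle, s, hsS, fun y hy => hs y (hker ▸ hy)⟩

/-- In an `S`-coherent ring, `span(b) ∩ (0 : a)` is `S`-finite. -/
lemma sfin_span_inf_ann (h : SCoherentRing R S) {k : ℕ} (b : Fin k → R) (a : R) :
    ∃ C : Ideal R, C.FG ∧ (∀ r ∈ C, r ∈ Ideal.span (Set.range b) ∧ r * a = 0) ∧
      ∃ s ∈ S, ∀ r, r ∈ Ideal.span (Set.range b) → r * a = 0 → s * r ∈ C := by
  obtain ⟨N₀, hfg, hle, s, hsS, hs⟩ := sfin_syzygies S h (fun i => a * b i)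
  set β : (Fin k → R) →ₗ[R] R := Fintype.linearCombination R b with hβ
  have hβ' : ∀ y, Fintype.linearCombination R (fun i => a * b i) y = a * β y := by
    intro y
    simp [hβ, Fintype.linearCombination_apply, Finset.mul_sum, smul_eq_mul, mul_left_comm]
  refine ⟨N₀.map β, hfg.map β, ?_, s, hsS, ?_⟩
  · rintro _ ⟨y, hy, rfl⟩
    constructor
    · rw [hβ, Fintype.linearCombination_apply]
      exact Submodule.sum_mem _ fun i _ =>
        Submodule.smul_mem _ _ (Ideal.subset_span ⟨i, rfl⟩)
    · have := LinearMap.mem_ker.mp (hle hy)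
      rw [hβ' y] at this
      rw [mul_comm]; exact this
  · intro r hr hra
    obtain ⟨c, hc⟩ := (Submodule.mem_span_range_iff_exists_fun R).mp hr
    have hcβ : β c = r := by rw [hβ, Fintype.linearCombination_apply]; exact hc
    have hcker : c ∈ LinearMap.ker (Fintype.linearCombination R (fun i => a * b i)) := by
      rw [LinearMap.mem_ker, hβ' c, hcβ, mul_comm]; exact hra
    have := hs c hcker
    refine ⟨s • c, this, ?_⟩
    rw [map_smul, hcβ, smul_eq_mul]

/-- The key inductive statement. -/
lemma sfin_ann (h : SCoherentRing R S) : ∀ (n : ℕ) (x : Fin n → R),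
    SFiniteIdeal R S (LinearMap.ker (LinearMap.toSpanSingleton R (Fin n → R) x)) := by
  have hmem : ∀ (n : ℕ) (x : Fin n → R) (r : R),
      r ∈ LinearMap.ker (LinearMap.toSpanSingleton R (Fin n → R) x) ↔ ∀ i, r * x i = 0 := by
    intro n x r
    rw [LinearMap.mem_ker, LinearMap.toSpanSingleton_apply, funext_iff]
    simp [smul_eq_mul]
  intro n
  induction n with
  | zero =>
    intro x
    refine ⟨⊤, ⟨{1}, by simp⟩, ?_, 1, S.one_mem, fun r _ => Submodule.mem_top⟩
    intro r _
    rw [hmem]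
    exact fun i => i.elim0
  | succ n ih =>
    intro x
    obtain ⟨J, hJfg, hJle, t, htS, ht⟩ := ih (fun i => x i.succ)
    obtain ⟨k, b, hb⟩ := Submodule.fg_iff_exists_fin_generating_family.mp hJfg
    have hb' : Ideal.span (Set.range b) = J := hb
    obtain ⟨C, hCfg, hCle, s, hsS, hs⟩ := sfin_span_inf_ann S h b (x 0)
    refine ⟨C, hCfg, ?_, s * t, S.mul_mem hsS htS, ?_⟩
    · intro r hr
      obtain ⟨hr1, hr2⟩ := hCle r hr
      rw [hb'] at hr1
      have hrA := hJle hr1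
      rw [hmem] at hrA
      rw [hmem]
      intro i
      refine Fin.cases ?_ ?_ i
      · exact hr2
      · intro j; exact hrA j
    · intro r hr
      rw [hmem] at hr
      have hrA : r ∈ LinearMap.ker
          (LinearMap.toSpanSingleton R (Fin n → R) (fun i => x i.succ)) := by
        rw [hmem]; intro i; exact hr i.succ
      have h1 : t * r ∈ Ideal.span (Set.range b) := by rw [hb']; exact ht r hrA
      have h2 : (t * r) * x 0 = 0 := by
        rw [mul_assoc, hr 0, mul_zero]
      have := hs (t * r) h1 h2
      rwa [← mul_assoc] at this

end Aux

/-- In an S-coherent ring, the annihilator of an element `x ∈ Rⁿ`, which equals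
`⋂ i, (0 :_R x i)`, is an S-finite ideal. -/
theorem stmt6 {R : Type*} [CommRing R] (S : Submonoid R)
    (h : SCoherentRing R S) (n : ℕ) (x : Fin n → R) :
    LinearMap.ker (LinearMap.toSpanSingleton R (Fin n → R) x) =
      (⨅ i, LinearMap.ker (LinearMap.toSpanSingleton R R (x i))) ∧
    SFiniteIdeal R S (LinearMap.ker (LinearMap.toSpanSingleton R (Fin n → R) x)) := by
  constructor
  · ext r
    simp only [LinearMap.mem_ker, LinearMap.toSpanSingleton_apply, Submodule.mem_iInf,
      funext_iff, Pi.smul_apply, Pi.zero_apply, smul_eq_mul]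
  · exact sfin_ann S h n x
end

section
/- If R is an S-coherent ring, then every cyclic submodule of a finitely generated free R-module Rⁿ is S-finitely presented. -/
open Function LinearMap

section Aux

variable {R : Type*} [CommRing R] (S : Submonoid R)

/-- Transfer lemma (a Schanuel-type argument): if `M` is `S`-finitely presented, then the
kernel of *any* surjection from a finite free module onto `M` is `S`-finite. -/
lemma sfp_transfer {M : Type*} [AddCommGroup M] [Module R M]
    (hM : SFinitePres R S M) {k : ℕ} (g : (Fin k → R) →ₗ[R] M) (hg : Function.Surjective g) :
    ∃ K₁ : Submodule R (Fin k → R), K₁.FG ∧ K₁ ≤ LinearMap.ker g ∧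
      ∃ s ∈ S, ∀ v ∈ LinearMap.ker g, s • v ∈ K₁ := by
  obtain ⟨m, f, hf, K₀, hK₀fg, hK₀le, s, hs, hsk⟩ := hM
  obtain ⟨h, hh⟩ := Module.projective_lifting_property f g hf
  obtain ⟨j, hj⟩ := Module.projective_lifting_property g f hg
  have hh' : ∀ v, f (h v) = g v := fun v => LinearMap.congr_fun hh v
  have hj' : ∀ w, g (j w) = f w := fun w => LinearMap.congr_fun hj w
  refine ⟨LinearMap.range (LinearMap.id - j.comp h) ⊔ K₀.map j, ?_, ?_, s, hs, ?_⟩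
  · refine Submodule.FG.sup ?_ (hK₀fg.map j)
    rw [← Submodule.map_top]
    exact Submodule.FG.map _ (Module.finite_def.mp inferInstance)
  · rw [sup_le_iff]
    constructor
    · rintro _ ⟨v, rfl⟩
      simp only [LinearMap.mem_ker, LinearMap.sub_apply, LinearMap.id_apply,
        LinearMap.comp_apply, map_sub, hj' (h v), hh' v, sub_self]
    · rintro _ ⟨w, hw, rfl⟩
      have : f w = 0 := hK₀le hw
      simp only [LinearMap.mem_ker, hj' w, this]
  · intro v hv
    have hvker : g v = 0 := hv
    have hwker : h v ∈ LinearMap.ker f := by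
      simp [LinearMap.mem_ker, hh' v, hvker]
    have h1 : s • h v ∈ K₀ := hsk _ hwker
    have key : s • v = ((LinearMap.id : (Fin k → R) →ₗ[R] (Fin k → R)) - j.comp h) (s • v)
        + j (s • h v) := by
      simp only [LinearMap.sub_apply, LinearMap.id_apply, LinearMap.comp_apply, map_smul]
      module
    rw [key]
    exact Submodule.add_mem _
      (Submodule.mem_sup_left (LinearMap.mem_range_self _ _))
      (Submodule.mem_sup_right (Submodule.mem_map_of_mem h1))

/-- In an `S`-coherent ring, the annihilator of an element of `Rⁿ` is `S`-finite. -/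
lemma ann_sfinite (h : SCoherentRing R S) :
    ∀ (n : ℕ) (x : Fin n → R), ∃ J : Ideal R, J.FG ∧ (∀ r ∈ J, r • x = 0) ∧
      ∃ s ∈ S, ∀ r : R, r • x = 0 → s * r ∈ J := by
  intro n
  induction n with
  | zero =>
    intro x
    exact ⟨⊤, ⟨{1}, by simp⟩, fun r _ => Subsingleton.elim _ _, 1, S.one_mem,
      fun r _ => Submodule.mem_top⟩
  | succ n ih =>
    intro x
    set x' : Fin n → R := x ∘ Fin.castSucc with hx'
    set c : R := x (Fin.last n) with hc
    have smul_iff : ∀ r : R, r • x = 0 ↔ (r • x' = 0 ∧ r * c = 0) := by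
      intro r
      constructor
      · intro hr
        refine ⟨funext fun i => ?_, ?_⟩
        · have := congrFun hr (Fin.castSucc i)
          simpa [x'] using this
        · have := congrFun hr (Fin.last n)
          simpa [c] using this
      · rintro ⟨h1, h2⟩
        funext i
        induction i using Fin.lastCases with
        | last => simpa [c] using h2
        | cast i =>
          have := congrFun h1 i
          simpa [x'] using this
    obtain ⟨J', hJ'fg, hJ'ann, s', hs', hs'mul⟩ := ih x'
    obtain ⟨k, a, ha⟩ := Submodule.fg_iff_exists_fin_generating_family.mp hJ'fg
    set π : (Fin k → R) →ₗ[R] R := Fintype.linearCombination R a with hπ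
    have hπrange : LinearMap.range π = J' := by
      rw [hπ, Fintype.range_linearCombination, ha]
    set μ : R →ₗ[R] R := LinearMap.toSpanSingleton R R c with hμ
    set I : Ideal R := Submodule.map μ J' with hI
    have hIfg : I.FG := Submodule.FG.map μ hJ'fg
    have key : ∀ v : Fin k → R, (μ.comp π) v ∈ I := by
      intro v
      exact Submodule.mem_map_of_mem (hπrange ▸ LinearMap.mem_range_self π v)
    set g : (Fin k → R) →ₗ[R] ↥I := LinearMap.codRestrict I (μ.comp π) key with hg
    have hgsurj : Function.Surjective g := by
      rintro ⟨y, hy⟩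
      obtain ⟨r, hr, rfl⟩ := hy
      have hr' : r ∈ LinearMap.range π := hπrange.symm ▸ hr
      obtain ⟨v, rfl⟩ := hr'
      exact ⟨v, rfl⟩
    obtain ⟨L, hLfg, hLle, t, ht, htk⟩ := sfp_transfer S (h I hIfg) g hgsurj
    have kerg : ∀ v : Fin k → R, v ∈ LinearMap.ker g ↔ π v * c = 0 := by
      intro v
      rw [LinearMap.mem_ker]
      constructor
      · intro hv
        have := congrArg (Subtype.val) hv
        simpa [g, μ, LinearMap.codRestrict, smul_eq_mul] using this
      · intro hv
        apply Subtype.ext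
        simpa [g, μ, LinearMap.codRestrict, smul_eq_mul] using hv
    refine ⟨Submodule.map π L, Submodule.FG.map π hLfg, ?_, t * s', S.mul_mem ht hs', ?_⟩
    · rintro _ ⟨v, hv, rfl⟩
      rw [smul_iff]
      have hvker := hLle hv
      refine ⟨hJ'ann _ (hπrange ▸ LinearMap.mem_range_self π v), (kerg v).mp hvker⟩
    · intro r hr
      rw [smul_iff] at hr
      have h1 : s' * r ∈ J' := hs'mul r hr.1
      have h2 : s' * r ∈ LinearMap.range π := hπrange.symm ▸ h1
      obtain ⟨v, hv⟩ := h2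
      have hvk : v ∈ LinearMap.ker g := by
        rw [kerg, hv, mul_assoc, hr.2, mul_zero]
      have h3 : t • v ∈ L := htk v hvk
      refine ⟨t • v, h3, ?_⟩
      rw [map_smul, hv, smul_eq_mul]
      ring

end Aux

/-- In an S-coherent ring, every cyclic submodule of a finitely generated free module
`Rⁿ` is S-finitely presented. -/
theorem stmt7 {R : Type*} [CommRing R] (S : Submonoid R)
    (h : SCoherentRing R S) (n : ℕ) (x : Fin n → R) :
    SFinitePres R S ↥(Submodule.span R {x}) := by
  obtain ⟨J, hJfg, hJann, s, hs, hsmul⟩ := ann_sfinite S h n x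
  have hx : x ∈ Submodule.span R {x} := Submodule.mem_span_singleton_self x
  set f : (Fin 1 → R) →ₗ[R] ↥(Submodule.span R {x}) :=
    (LinearMap.toSpanSingleton R _ (⟨x, hx⟩ : ↥(Submodule.span R {x}))).comp
      (LinearMap.proj 0) with hf
  set ι : R →ₗ[R] (Fin 1 → R) := LinearMap.pi (fun _ : Fin 1 => LinearMap.id) with hι
  have kerf : ∀ v : Fin 1 → R, v ∈ LinearMap.ker f ↔ v 0 • x = 0 := by
    intro v
    rw [LinearMap.mem_ker]
    constructor
    · intro hv
      have := congrArg (Subtype.val) hv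
      simpa [f, LinearMap.toSpanSingleton] using this
    · intro hv
      apply Subtype.ext
      simpa [f, LinearMap.toSpanSingleton] using hv
  refine ⟨1, f, ?_, Submodule.map ι J, Submodule.FG.map ι hJfg, ?_, s, hs, ?_⟩
  · rintro ⟨y, hy⟩
    obtain ⟨r, rfl⟩ := Submodule.mem_span_singleton.mp hy
    exact ⟨fun _ => r, Subtype.ext rfl⟩
  · rintro _ ⟨a, haJ, rfl⟩
    rw [kerf]
    simpa [ι] using hJann a haJ
  · intro v hv
    rw [kerf] at hv
    have h1 : s * v 0 ∈ J := hsmul _ hv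
    refine ⟨s * v 0, h1, ?_⟩
    funext i
    have : i = 0 := Subsingleton.elim i 0
    subst this
    simp [ι, smul_eq_mul]
end

section
/- If R is an S-coherent ring, then every finitely generated free R-module is an S-coherent R-module, i.e., every finitely generated submodule of Rⁿ is S-finitely presented. -/
open Function LinearMap

/-- Schanuel-type transfer: if some presentation of `P` (from a f.g. free module) has
`S`-finite kernel witnessed by `s`, then any presentation of `P` has `S`-finite kernel
witnessed by the same `s`. -/
lemma transfer_aux {R : Type*} [CommRing R] {P : Type*} [AddCommGroup P] [Module R P]
    {a b : ℕ} (f : (Fin a → R) →ₗ[R] P) (g : (Fin b → R) →ₗ[R] P)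
    (hf : Function.Surjective f) (hg : Function.Surjective g)
    (K₀ : Submodule R (Fin a → R)) (hK₀ : K₀.FG) (hle : K₀ ≤ LinearMap.ker f)
    (s : R) (hsk : ∀ x ∈ LinearMap.ker f, s • x ∈ K₀) :
    ∃ K' : Submodule R (Fin b → R), K'.FG ∧ K' ≤ LinearMap.ker g ∧
      ∀ x ∈ LinearMap.ker g, s • x ∈ K' := by
  obtain ⟨h₁, hh₁⟩ := Module.projective_lifting_property f g hf
  obtain ⟨h₂, hh₂⟩ := Module.projective_lifting_property g f hg
  -- the pullback X = {(x, y) | g x = f y}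
  set D : ((Fin b → R) × (Fin a → R)) →ₗ[R] P :=
    g ∘ₗ LinearMap.fst R _ _ - f ∘ₗ LinearMap.snd R _ _ with hD
  have memD : ∀ x y, (x, y) ∈ LinearMap.ker D ↔ g x = f y := by
    intro x y
    simp [hD, LinearMap.mem_ker, sub_eq_zero]
  -- a f.g. submodule of the pullback
  set KX : Submodule R ((Fin b → R) × (Fin a → R)) :=
    Submodule.map (LinearMap.prod LinearMap.id h₁) ⊤ ⊔
      Submodule.map (LinearMap.inr R _ _) K₀ with hKX
  have hKXfg : KX.FG :=
    Submodule.FG.sup (Submodule.FG.map _ Module.Finite.fg_top) (Submodule.FG.map _ hK₀)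
  have hKXle : KX ≤ LinearMap.ker D := by
    rw [hKX, sup_le_iff]
    constructor
    · rintro _ ⟨x, -, rfl⟩
      rw [LinearMap.prod_apply]
      refine (memD _ _).2 ?_
      exact (LinearMap.congr_fun hh₁ x).symm
    · rintro _ ⟨k, hk, rfl⟩
      refine (memD _ _).2 ?_
      simpa using (LinearMap.mem_ker.1 (hle hk)).symm
  have hKXs : ∀ z ∈ LinearMap.ker D, s • z ∈ KX := by
    rintro ⟨x, y⟩ hz
    have hgf : g x = f y := (memD _ _).1 hz
    have h1 : (s • x, h₁ (s • x)) ∈ KX :=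
      Submodule.mem_sup_left ⟨s • x, trivial, rfl⟩
    have h2 : ((0 : Fin b → R), s • y - h₁ (s • x)) ∈ KX := by
      refine Submodule.mem_sup_right ⟨s • y - h₁ (s • x), ?_, rfl⟩
      have hker : y - h₁ x ∈ LinearMap.ker f := by
        have hfh : f (h₁ x) = g x := LinearMap.congr_fun hh₁ x
        rw [LinearMap.mem_ker, map_sub, sub_eq_zero, hfh]
        exact hgf.symm
      have := hsk _ hker
      rwa [smul_sub, ← map_smul] at this
    have := KX.add_mem h1 h2
    simpa [Prod.smul_mk, Prod.mk_add_mk] using this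
  -- project the pullback onto ker g
  set ρ : ((Fin b → R) × (Fin a → R)) →ₗ[R] (Fin b → R) :=
    LinearMap.fst R _ _ - h₂ ∘ₗ LinearMap.snd R _ _ with hρ
  have hρker : ∀ z ∈ LinearMap.ker D, ρ z ∈ LinearMap.ker g := by
    rintro ⟨x, y⟩ hz
    have hgf : g x = f y := (memD _ _).1 hz
    have : g (h₂ y) = f y := LinearMap.congr_fun hh₂ y
    simp [hρ, LinearMap.mem_ker, map_sub, this, hgf]
  refine ⟨Submodule.map ρ KX, Submodule.FG.map _ hKXfg, ?_, ?_⟩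
  · rintro _ ⟨z, hz, rfl⟩
    exact hρker z (hKXle hz)
  · intro x hx
    have hz : ((x, 0) : (Fin b → R) × (Fin a → R)) ∈ LinearMap.ker D :=
      (memD _ _).2 (by simp [LinearMap.mem_ker.1 hx])
    refine ⟨s • (x, 0), hKXs _ hz, ?_⟩
    simp [hρ]

/-- The main induction: the kernel of any map `Rᵐ → Rⁿ` is `S`-finite when `R` is
`S`-coherent. -/
lemma ker_sfinite_s8 {R : Type*} [CommRing R] (S : Submonoid R) (h : SCoherentRing R S) :
    ∀ (n m : ℕ) (g : (Fin m → R) →ₗ[R] (Fin n → R)),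
      ∃ K₀ : Submodule R (Fin m → R), K₀.FG ∧ K₀ ≤ LinearMap.ker g ∧
        ∃ s ∈ S, ∀ x ∈ LinearMap.ker g, s • x ∈ K₀ := by
  intro n
  induction n with
  | zero =>
    intro m g
    refine ⟨⊤, Module.Finite.fg_top, ?_, 1, S.one_mem, fun x _ => trivial⟩
    intro x _
    rw [LinearMap.mem_ker]
    exact Subsingleton.elim _ _
  | succ n ih =>
    intro m g
    -- project to the last coordinate
    set π : (Fin (n + 1) → R) →ₗ[R] R := LinearMap.proj (Fin.last n) with hπ
    set gI : (Fin m → R) →ₗ[R] R := π ∘ₗ g with hgI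
    have hIfg : (LinearMap.range gI).FG := by
      rw [LinearMap.range_eq_map]; exact Submodule.FG.map _ Module.Finite.fg_top
    obtain ⟨k, p, hp, Kp, hKpfg, hKple, s₁, hs₁, hs₁k⟩ := h (LinearMap.range gI) hIfg
    -- corestrict gI to its range and transfer the S-finiteness of the kernel
    obtain ⟨K₁, hK₁fg, hK₁le, hK₁s⟩ :=
      transfer_aux p gI.rangeRestrict hp gI.surjective_rangeRestrict Kp hKpfg hKple s₁ hs₁k
    rw [LinearMap.ker_rangeRestrict] at hK₁le hK₁s
    -- present K₁ by a free module
    obtain ⟨t, w, hw⟩ := Submodule.fg_iff_exists_fin_generating_family.1 hK₁fg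
    set u : (Fin t → R) →ₗ[R] (Fin m → R) := Fintype.linearCombination R w with hu
    have hur : LinearMap.range u = K₁ := by
      rw [hu, Fintype.range_linearCombination]; exact hw
    -- drop the last coordinate
    set r : (Fin (n + 1) → R) →ₗ[R] (Fin n → R) :=
      LinearMap.funLeft R R Fin.castSucc with hr
    have hzero : ∀ z : Fin (n + 1) → R, π z = 0 → r z = 0 → z = 0 := by
      intro z h1 h2
      funext i
      refine Fin.lastCases ?_ ?_ i
      · exact h1
      · intro j; exact congrFun h2 j
    obtain ⟨K₂, hK₂fg, hK₂le, s₂, hs₂, hs₂k⟩ := ih t (r ∘ₗ g ∘ₗ u)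
    refine ⟨Submodule.map u K₂, Submodule.FG.map _ hK₂fg, ?_, s₂ * s₁, S.mul_mem hs₂ hs₁, ?_⟩
    · rintro _ ⟨y, hy, rfl⟩
      have hy1 : u y ∈ K₁ := hur ▸ LinearMap.mem_range_self u y
      have hπ0 : π (g (u y)) = 0 := LinearMap.mem_ker.1 (hK₁le hy1)
      have hr0 : r (g (u y)) = 0 := LinearMap.mem_ker.1 (hK₂le hy)
      exact LinearMap.mem_ker.2 (hzero _ hπ0 hr0)
    · intro x hx
      have hxI : x ∈ LinearMap.ker gI := by
        rw [LinearMap.mem_ker, hgI, LinearMap.comp_apply, LinearMap.mem_ker.1 hx, map_zero]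
      have h1 : s₁ • x ∈ K₁ := hK₁s x hxI
      obtain ⟨y, hy⟩ := hur.symm ▸ h1
      have hyk : y ∈ LinearMap.ker (r ∘ₗ g ∘ₗ u) := by
        rw [LinearMap.mem_ker, LinearMap.comp_apply, LinearMap.comp_apply, hy, map_smul,
          LinearMap.mem_ker.1 hx, smul_zero, map_zero]
      refine ⟨s₂ • y, hs₂k y hyk, ?_⟩
      rw [map_smul, hy, smul_smul]

/-- If `R` is S-coherent, every finitely generated free module `Rⁿ` is an S-coherent
module: every finitely generated submodule of `Rⁿ` is S-finitely presented. -/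
theorem stmt8 {R : Type*} [CommRing R] (S : Submonoid R)
    (h : SCoherentRing R S) (n : ℕ) :
    SCoherentMod R S (Fin n → R) := by
  refine ⟨inferInstance, ?_⟩
  intro N hN
  obtain ⟨m, w, hw⟩ := Submodule.fg_iff_exists_fin_generating_family.1 hN
  set g : (Fin m → R) →ₗ[R] (Fin n → R) := Fintype.linearCombination R w with hg
  have hrange : LinearMap.range g = N := by
    rw [hg, Fintype.range_linearCombination]; exact hw
  obtain ⟨K₀, hfg, hle, s, hs, hsk⟩ := ker_sfinite_s8 S h n m g
  subst hrange
  exact ⟨m, g.rangeRestrict, g.surjective_rangeRestrict, K₀, hfg,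
    by rw [LinearMap.ker_rangeRestrict]; exact hle, s, hs,
    by rw [LinearMap.ker_rangeRestrict]; exact hsk⟩
end

section
/- A commutative ring R is S-coherent if and only if every finitely presented R-module is an S-coherent R-module. -/
open Function LinearMap

section Aux

universe v

variable {R : Type v} [CommRing R] (S : Submonoid R)

/-- `N` is an `S`-finite submodule of `P`. -/
def SFinSub {P : Type*} [AddCommGroup P] [Module R P] (N : Submodule R P) : Prop :=
  ∃ C : Submodule R P, C.FG ∧ C ≤ N ∧ ∃ s ∈ S, ∀ x ∈ N, s • x ∈ C

/-- S-analogue of Schanuel: if `M` is `S`-finitely presented, then the kernel of any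
surjection onto `M` from a finite projective module is `S`-finite. -/
lemma sfinsub_ker_of_pres {P M : Type*} [AddCommGroup P] [Module R P]
    [Module.Finite R P] [Module.Projective R P]
    [AddCommGroup M] [Module R M]
    (hM : SFinitePres R S M) (g : P →ₗ[R] M) (hg : Function.Surjective g) :
    SFinSub S (LinearMap.ker g) := by
  obtain ⟨n, f, hf, K₀, hK₀fg, hK₀le, s, hsS, hs⟩ := hM
  obtain ⟨h, hh⟩ := Module.projective_lifting_property f g hf
  obtain ⟨k, hk⟩ := Module.projective_lifting_property g f hg
  refine ⟨LinearMap.range (LinearMap.id - k ∘ₗ h) ⊔ K₀.map k, ?_, ?_, s, hsS, ?_⟩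
  · exact Submodule.FG.sup
      (by rw [LinearMap.range_eq_map]; exact (Module.Finite.fg_top (R := R) (M := P)).map _)
      (hK₀fg.map k)
  · refine sup_le ?_ ?_
    · rintro x ⟨y, rfl⟩
      have : g (y - k (h y)) = 0 := by
        have h1 : f (h y) = g y := congrArg (fun l => l y) hh
        have h2 : g (k (h y)) = f (h y) := congrArg (fun l => l (h y)) hk
        simp [map_sub, h1, h2]
      simpa [LinearMap.mem_ker] using this
    · rintro x ⟨y, hy, rfl⟩
      have : g (k y) = f y := congrArg (fun l => l y) hk
      have hy0 : f y = 0 := hK₀le hy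
      simp [LinearMap.mem_ker, this, hy0]
  · intro x hx
    have hhx : h x ∈ LinearMap.ker f := by
      have h1 : f (h x) = g x := congrArg (fun l => l x) hh
      simp [LinearMap.mem_ker, h1, LinearMap.mem_ker.mp hx]
    have hsK : s • h x ∈ K₀ := hs _ hhx
    have : s • x = (s • x - k (h (s • x))) + k (s • h x) := by
      rw [map_smul]; ring_nf; abel
    rw [this]
    exact Submodule.add_mem _
      (Submodule.mem_sup_left ⟨s • x, rfl⟩)
      (Submodule.mem_sup_right ⟨s • h x, hsK, rfl⟩)

/-- If `R` is `S`-coherent, the kernel of any map from a finite projective module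
into `Rⁿ` is `S`-finite. -/
lemma sfinsub_ker_pi (hR : SCoherentRing R S) (n : ℕ) :
    ∀ {P : Type v} [AddCommGroup P] [Module R P],
      ∀ [Module.Finite R P] [Module.Projective R P]
      (f : P →ₗ[R] (Fin n → R)), SFinSub S (LinearMap.ker f) := by
  induction n with
  | zero =>
    intro P _ _ _ _ f
    refine ⟨⊤, Module.Finite.fg_top, ?_, 1, S.one_mem, fun x _ => trivial⟩
    intro x _
    simp only [LinearMap.mem_ker]
    ext i
    exact i.elim0
  | succ n ih =>
    intro P _ _ _ _ f
    set f₁ : P →ₗ[R] R := (LinearMap.proj 0).comp f with hf₁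
    set f' : P →ₗ[R] (Fin n → R) := (LinearMap.funLeft R R Fin.succ).comp f with hf'
    have hmem : ∀ x : P, x ∈ LinearMap.ker f ↔ f₁ x = 0 ∧ f' x = 0 := by
      intro x
      constructor
      · intro hx
        have : f x = 0 := hx
        constructor
        · show f x 0 = 0; rw [this]; rfl
        · show (fun i => f x (Fin.succ i)) = 0
          funext i; rw [this]; rfl
      · rintro ⟨h1, h2⟩
        show f x = 0
        funext i
        refine Fin.cases ?_ ?_ i
        · exact h1
        · intro j; exact congrFun h2 j
    have hIfg : (LinearMap.range f₁).FG := by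
      rw [LinearMap.range_eq_map]; exact (Module.Finite.fg_top (R := R) (M := P)).map _
    have h1 := sfinsub_ker_of_pres S (hR _ hIfg) f₁.rangeRestrict f₁.surjective_rangeRestrict
    rw [LinearMap.ker_rangeRestrict] at h1
    obtain ⟨C₁, hC₁fg, hC₁le, s₁, hs₁S, hs₁⟩ := h1
    obtain ⟨k, w, hw⟩ := Submodule.fg_iff_exists_fin_generating_family.mp hC₁fg
    set u : (Fin k → R) →ₗ[R] P := Fintype.linearCombination R w with hu
    have hru : LinearMap.range u = C₁ := by
      rw [hu, Fintype.range_linearCombination, hw]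
    obtain ⟨D, hDfg, hDle, s₂, hs₂S, hs₂⟩ := ih (P := Fin k → R) (f'.comp u)
    refine ⟨D.map u, hDfg.map u, ?_, s₂ * s₁, S.mul_mem hs₂S hs₁S, ?_⟩
    · rintro x ⟨d, hd, rfl⟩
      rw [hmem]
      constructor
      · have : u d ∈ C₁ := hru ▸ ⟨d, rfl⟩
        exact hC₁le this
      · exact hDle hd
    · intro x hx
      obtain ⟨hx1, hx2⟩ := hmem x |>.mp hx
      have hsx : s₁ • x ∈ C₁ := hs₁ x hx1
      rw [← hru] at hsx
      obtain ⟨y, hy⟩ := hsx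
      have hyker : y ∈ LinearMap.ker (f'.comp u) := by
        simp only [LinearMap.mem_ker, LinearMap.comp_apply, hy, map_smul, hx2, smul_zero]
      have := hs₂ y hyker
      refine ⟨s₂ • y, this, ?_⟩
      rw [map_smul, hy, smul_smul]

/-- If `R` is `S`-coherent, the preimage of a finitely generated submodule of `Rⁿ`
under a map from a finite projective module is `S`-finite. -/
lemma sfinsub_comap (hR : SCoherentRing R S)
    {P : Type v} [AddCommGroup P] [Module R P]
    [Module.Finite R P] [Module.Projective R P]
    {n : ℕ} (f : P →ₗ[R] (Fin n → R)) (K : Submodule R (Fin n → R)) (hK : K.FG) :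
    SFinSub S (K.comap f) := by
  obtain ⟨k, w, hw⟩ := Submodule.fg_iff_exists_fin_generating_family.mp hK
  set u : (Fin k → R) →ₗ[R] (Fin n → R) := Fintype.linearCombination R w with hu
  have hru : LinearMap.range u = K := by rw [hu, Fintype.range_linearCombination, hw]
  set F : (P × (Fin k → R)) →ₗ[R] (Fin n → R) :=
    f.comp (LinearMap.fst R P (Fin k → R)) - u.comp (LinearMap.snd R P (Fin k → R)) with hF
  obtain ⟨D, hDfg, hDle, s, hsS, hs⟩ := sfinsub_ker_pi S hR n (P := P × (Fin k → R)) F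
  refine ⟨D.map (LinearMap.fst R P (Fin k → R)), hDfg.map _, ?_, s, hsS, ?_⟩
  · rintro x ⟨⟨a, b⟩, hd, rfl⟩
    have h0 : F (a, b) = 0 := hDle hd
    have : f a = u b := by
      rw [hF] at h0
      simp only [LinearMap.sub_apply, LinearMap.comp_apply, LinearMap.fst_apply,
        LinearMap.snd_apply, sub_eq_zero] at h0
      exact h0
    show f a ∈ K
    rw [this, ← hru]; exact ⟨b, rfl⟩
  · intro x hx
    have : f x ∈ K := hx
    rw [← hru] at this
    obtain ⟨y, hy⟩ := this
    have hker : (x, y) ∈ LinearMap.ker F := by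
      simp only [LinearMap.mem_ker, hF, LinearMap.sub_apply, LinearMap.comp_apply,
        LinearMap.fst_apply, LinearMap.snd_apply, hy, sub_self]
    exact ⟨s • (x, y), hs _ hker, rfl⟩

end Aux

/-- A ring `R` is S-coherent iff every finitely presented `R`-module is an
S-coherent module. -/
theorem stmt9 {R : Type u} [CommRing R] (S : Submonoid R) :
    SCoherentRing R S ↔
      ∀ (M : Type u) (_ : AddCommGroup M) (_ : Module R M),
        Module.FinitePresentation R M → SCoherentMod R S M := by
  constructor
  · intro hR M _ _ hfp
    haveI := hfp
    refine ⟨inferInstance, fun N hN => ?_⟩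
    -- present N by generators
    obtain ⟨k, w, hw⟩ := Submodule.fg_iff_exists_fin_generating_family.mp hN
    set g : (Fin k → R) →ₗ[R] M := Fintype.linearCombination R w with hg
    have hrg : LinearMap.range g = N := by
      rw [hg, Fintype.range_linearCombination, hw]
    have hmemN : ∀ x, g x ∈ N := fun x => hrg ▸ ⟨x, rfl⟩
    set g' : (Fin k → R) →ₗ[R] ↥N := LinearMap.codRestrict N g hmemN with hg'
    have hg'surj : Function.Surjective g' := by
      rintro ⟨y, hy⟩
      rw [← hrg] at hy
      obtain ⟨x, hx⟩ := hy
      exact ⟨x, Subtype.ext hx⟩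
    -- a finite presentation of M
    obtain ⟨n, π, hπ⟩ := Module.Finite.exists_fin' R M
    have hkfg : (LinearMap.ker π).FG := Module.FinitePresentation.fg_ker π hπ
    -- lift g through π
    obtain ⟨h, hh⟩ := Module.projective_lifting_property π g hπ
    have hkerg : LinearMap.ker g = (LinearMap.ker π).comap h := by
      ext x
      have h1 : π (h x) = g x := congrArg (fun l => l x) hh
      simp [LinearMap.mem_ker, Submodule.mem_comap, h1]
    obtain ⟨C, hCfg, hCle, s, hsS, hs⟩ := sfinsub_comap S hR h (LinearMap.ker π) hkfg
    rw [← hkerg] at hCle hs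
    refine ⟨k, g', hg'surj, C, hCfg, ?_, s, hsS, ?_⟩
    · rw [hg', LinearMap.ker_codRestrict]
      exact hCle
    · intro x hx
      rw [hg', LinearMap.ker_codRestrict] at hx
      exact hs x hx
  · intro H I hI
    exact (H R inferInstance inferInstance
      (Module.finitePresentation_of_projective R R)).2 I hI
end

section
/- Let 0 → K → F → M → 0 be an exact sequence of R-modules with F finitely generated free and M c-S-finitely presented. Then K is S-finite. -/
open Function LinearMap

/-- A module `M` is c-S-finitely presented: there is a finitely presented submodule
`N ⊆ M` and `s ∈ S` with `s • M ⊆ N`. -/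
def CSFinitePresMod (R : Type*) [CommRing R] (S : Submonoid R)
    (M : Type*) [AddCommGroup M] [Module R M] : Prop :=
  ∃ N : Submodule R M, Module.FinitePresentation R ↥N ∧ ∃ s ∈ S, ∀ m : M, s • m ∈ N

/-- An ideal `I` is c-S-finitely presented. -/
def CSFiniteIdeal (R : Type*) [CommRing R] (S : Submonoid R) (I : Ideal R) : Prop :=
  ∃ J : Ideal R, J ≤ I ∧ Module.FinitePresentation R ↥J ∧ ∃ s ∈ S, ∀ x ∈ I, s * x ∈ J

/-- `R` is c-S-coherent: every finitely generated ideal is c-S-finitely presented. -/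
def CSCoherentRing (R : Type*) [CommRing R] (S : Submonoid R) : Prop :=
  ∀ I : Ideal R, I.FG → CSFiniteIdeal R S I

/-- If `0 → K → F → M → 0` is exact with `F` finitely generated free and `M`
c-S-finitely presented, then `K` is S-finite. -/
theorem stmt10 {R : Type*} [CommRing R] (S : Submonoid R)
    {K M : Type*} [AddCommGroup K] [Module R K] [AddCommGroup M] [Module R M]
    (n : ℕ) (f : K →ₗ[R] (Fin n → R)) (g : (Fin n → R) →ₗ[R] M)
    (hf : Function.Injective f) (hg : Function.Surjective g) (hfg : Function.Exact f g)
    (hM : CSFinitePresMod R S M) :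
    SFiniteMod R S K := by
  classical
  obtain ⟨N, hNfp, s, hsS, hsN⟩ := hM
  haveI : Module.FinitePresentation R ↥N := hNfp
  obtain ⟨m, π, hπ⟩ := Module.Finite.exists_fin' R ↥N
  have hker : (LinearMap.ker π).FG := Module.FinitePresentation.fg_ker π hπ
  choose x hx using fun i : Fin m => hg (π (Pi.single i 1))
  set φ : (Fin m → R) →ₗ[R] (Fin n → R) := (Pi.basisFun R (Fin m)).constr ℕ x with hφ
  have hgφ : ∀ v, g (φ v) = (π v : M) := by
    intro v
    have : g.comp φ = N.subtype.comp π := by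
      apply (Pi.basisFun R (Fin m)).ext
      intro i
      simp only [LinearMap.comp_apply, hφ, Module.Basis.constr_basis]
      rw [Pi.basisFun_apply]
      exact hx i
    exact DFunLike.congr_fun this v
  choose y hy using fun j : Fin n => hπ ⟨s • g (Pi.single j 1 : Fin n → R), hsN _⟩
  set G : Fin n → (Fin n → R) := fun j => s • (Pi.single j 1 : Fin n → R) - φ (y j) with hG
  set K₀ : Submodule R (Fin n → R) :=
    Submodule.span R (Set.range G) ⊔ (LinearMap.ker π).map φ with hK₀
  have hK₀fg : K₀.FG :=
    Submodule.FG.sup (Submodule.fg_span (Set.finite_range G)) (hker.map φ)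
  have hGker : ∀ j, G j ∈ LinearMap.ker g := by
    intro j
    simp only [hG, LinearMap.mem_ker, map_sub, map_smul, hgφ, hy, sub_self]
  have hK₀le : K₀ ≤ LinearMap.ker g := by
    rw [hK₀, sup_le_iff]
    constructor
    · rw [Submodule.span_le]
      rintro _ ⟨j, rfl⟩
      exact hGker j
    · rintro _ ⟨z, hz, rfl⟩
      simp only [SetLike.mem_coe, LinearMap.mem_ker] at hz ⊢
      rw [hgφ, hz]; simp
  have hmain : ∀ v ∈ LinearMap.ker g, s • v ∈ K₀ := by
    intro v hv
    have hvsum : v = ∑ j, v j • (Pi.single j 1 : Fin n → R) := by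
      conv_lhs => rw [← Finset.univ_sum_single v]
      refine Finset.sum_congr rfl fun j _ => ?_
      rw [← Pi.single_smul, smul_eq_mul, mul_one]
    have key : s • v = (∑ j, v j • G j) + φ (∑ j, v j • y j) := by
      rw [map_sum]
      conv_lhs => rw [hvsum]
      rw [Finset.smul_sum, ← Finset.sum_add_distrib]
      refine Finset.sum_congr rfl fun j _ => ?_
      simp only [hG, smul_sub, map_smul]
      rw [smul_comm]
      abel
    have hπsum : (∑ j, v j • y j) ∈ LinearMap.ker π := by
      rw [LinearMap.mem_ker]
      have hc : N.subtype (π (∑ j, v j • y j)) = s • g v := by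
        rw [map_sum, map_sum]
        simp only [map_smul, hy, Submodule.coe_subtype, SetLike.val_smul]
        have : ∀ j ∈ Finset.univ, v j • (s • g (Pi.single j 1 : Fin n → R))
            = s • g (v j • (Pi.single j 1 : Fin n → R)) := by
          intro j _
          rw [map_smul, smul_comm]
        rw [Finset.sum_congr rfl this, ← Finset.smul_sum, ← map_sum, ← hvsum]
      rw [LinearMap.mem_ker] at hv
      have : N.subtype (π (∑ j, v j • y j)) = 0 := by rw [hc, hv, smul_zero]
      exact Subtype.ext this
    rw [key]
    exact Submodule.add_mem _
      (Submodule.mem_sup_left (Submodule.sum_mem _ fun j _ =>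
        Submodule.smul_mem _ _ (Submodule.subset_span ⟨j, rfl⟩)))
      (Submodule.mem_sup_right (Submodule.mem_map_of_mem hπsum))
  refine ⟨K₀.comap f, ?_, s, hsS, ?_⟩
  · have hrange : LinearMap.range f = LinearMap.ker g := hfg.linearMap_ker_eq.symm
    have hmap : (K₀.comap f).map f = K₀ := by
      rw [Submodule.map_comap_eq, hrange, inf_eq_right.mpr hK₀le]
    exact Submodule.fg_of_fg_map_injective f hf (by rw [hmap]; exact hK₀fg)
  · intro k
    rw [Submodule.mem_comap, map_smul]
    exact hmain _ (by rw [LinearMap.mem_ker]; exact hfg.apply_apply_eq_zero k)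
end

section
/- Every c-S-coherent commutative ring is S-coherent. -/
open Function LinearMap

/-- Every c-S-coherent commutative ring is S-coherent. -/
theorem stmt11 {R : Type*} [CommRing R] (S : Submonoid R)
    (h : CSCoherentRing R S) : SCoherentRing R S := by
  intro I hI
  obtain ⟨J, hJI, hJfp, s, hsS, hsJ⟩ := h I hI
  haveI := hJfp
  obtain ⟨n, a, ha⟩ := Submodule.fg_iff_exists_fin_generating_family.mp hI
  have haI : ∀ i, a i ∈ I := fun i => ha ▸ Submodule.subset_span ⟨i, rfl⟩
  set f0 : (Fin n → R) →ₗ[R] R := Fintype.linearCombination R a with hf0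
  have hf0mem : ∀ x : Fin n → R, f0 x ∈ I := fun x => by
    rw [hf0, Fintype.linearCombination_apply]
    exact Submodule.sum_mem _ fun i _ => Submodule.smul_mem _ _ (haI i)
  set f : (Fin n → R) →ₗ[R] ↥I := LinearMap.codRestrict I f0 hf0mem with hf
  have hfsurj : Function.Surjective f := by
    intro y
    have hy : (↑y : R) ∈ Submodule.span R (Set.range a) := by rw [ha]; exact y.2
    obtain ⟨c, hc⟩ := (Submodule.mem_span_range_iff_exists_fun R).mp hy
    exact ⟨c, Subtype.ext (by simpa [hf, hf0, Fintype.linearCombination_apply] using hc)⟩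
  -- J as a submodule of ↥I
  set J' : Submodule R ↥I := Submodule.comap I.subtype J with hJ'
  have hmemJ' : ∀ y : ↥I, y ∈ J' ↔ (y : R) ∈ J := fun y => Iff.rfl
  haveI fpJ' : Module.FinitePresentation R ↥J' := by
    have e := Submodule.comapSubtypeEquivOfLe hJI
    refine Module.finitePresentation_of_surjective e.symm.toLinearMap (show Function.Surjective ⇑e.symm.toLinearMap from e.symm.surjective) ?_
    have hk : LinearMap.ker e.symm.toLinearMap = ⊥ := LinearEquiv.ker e.symm
    rw [hk]
    exact Submodule.fg_bot
  haveI : Module.Finite R ↥J' := inferInstance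
  obtain ⟨m, b, hb⟩ := Submodule.fg_iff_exists_fin_generating_family.mp
    (Module.finite_def.mp ‹Module.Finite R ↥J'›)
  choose w hw using fun j => hfsurj ((b j : ↥I))
  set G : Submodule R (Fin n → R) :=
    Submodule.span R (Set.range w) ⊔
      Submodule.span R (Set.range fun i => s • (Pi.single i 1 : Fin n → R)) with hG
  have hGfg : G.FG :=
    Submodule.FG.sup (Submodule.fg_span (Set.finite_range w))
      (Submodule.fg_span (Set.finite_range _))
  have hsmul : ∀ x : Fin n → R, s • x ∈ G := by
    intro x
    apply Submodule.mem_sup_right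
    have : s • x = ∑ i, x i • (s • (Pi.single i 1 : Fin n → R)) := by
      funext j
      simp [Pi.single_apply, Finset.sum_apply, mul_comm]
    rw [this]
    exact Submodule.sum_mem _ fun i _ => Submodule.smul_mem _ _ (Submodule.subset_span ⟨i, rfl⟩)
  have hG_le : G ≤ Submodule.comap f J' := by
    apply sup_le
    · rw [Submodule.span_le]
      rintro _ ⟨j, rfl⟩
      simp only [SetLike.mem_coe, Submodule.mem_comap]
      rw [hw j]
      exact (b j).2
    · rw [Submodule.span_le]
      rintro _ ⟨i, rfl⟩
      simp only [SetLike.mem_coe, Submodule.mem_comap, map_smul]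
      rw [hmemJ']
      have : ((s • f (Pi.single i 1) : ↥I) : R) = s * (f (Pi.single i 1) : R) := rfl
      rw [this]
      exact hsJ _ (f (Pi.single i 1)).2
  set g : ↥G →ₗ[R] ↥J' := LinearMap.codRestrict J' (f ∘ₗ G.subtype) (fun x => hG_le x.2) with hg
  have hgsurj : Function.Surjective g := by
    intro y
    have hy : y ∈ Submodule.span R (Set.range b) := by rw [hb]; exact Submodule.mem_top
    obtain ⟨c, hc⟩ := (Submodule.mem_span_range_iff_exists_fun R).mp hy
    refine ⟨⟨∑ j, c j • w j, Submodule.sum_mem _ fun j _ =>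
      Submodule.smul_mem _ _ (Submodule.mem_sup_left (Submodule.subset_span ⟨j, rfl⟩))⟩, ?_⟩
    apply Subtype.ext
    show (f ∘ₗ G.subtype) _ = (y : ↥I)
    simp only [LinearMap.comp_apply, Submodule.subtype_apply, map_sum, map_smul]
    simp_rw [hw]
    rw [← hc]
    push_cast
    rfl
  haveI : Module.Finite R ↥G := Module.Finite.iff_fg.mpr hGfg
  have hker : (LinearMap.ker g).FG := Module.FinitePresentation.fg_ker g hgsurj
  refine ⟨n, f, hfsurj, (LinearMap.ker g).map G.subtype, hker.map _, ?_, s, hsS, ?_⟩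
  · rintro _ ⟨u, hu, rfl⟩
    rw [LinearMap.mem_ker]
    have h0 : g u = 0 := hu
    have : ((g u : ↥J') : ↥I) = f (u : Fin n → R) := rfl
    rw [h0] at this
    exact this.symm
  · intro x hx
    refine ⟨⟨s • x, hsmul x⟩, ?_, rfl⟩
    rw [SetLike.mem_coe, LinearMap.mem_ker]
    apply Subtype.ext
    show f (s • x) = (0 : ↥I)
    rw [map_smul, LinearMap.mem_ker.mp hx, smul_zero]
end

section
/- If D is an integral domain that is not coherent and S = D \ {0}, then D is a c-S-coherent ring; i.e., every nonzero finitely generated ideal I of D contains a finitely presented sub-ideal J with sI ⊆ J for some nonzero s ∈ D. -/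
/-- If `D` is an integral domain that is not coherent and `S = D \ {0}`, then `D` is
c-S-coherent: every nonzero finitely generated ideal `I` contains a finitely presented
sub-ideal `J` with `s • I ⊆ J` for some nonzero `s`. -/
theorem stmt13 {D : Type*} [CommRing D] [IsDomain D]
    (hnc : ¬ ∀ I : Ideal D, I.FG → Module.FinitePresentation D ↥I) :
    ∀ I : Ideal D, I.FG → I ≠ ⊥ →
      ∃ J : Ideal D, J ≤ I ∧ Module.FinitePresentation D ↥J ∧
        ∃ s : D, s ≠ 0 ∧ ∀ x ∈ I, s * x ∈ J := by
  intro I _ hI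
  obtain ⟨s, hsI, hs⟩ := Submodule.exists_mem_ne_zero_of_ne_bot hI
  refine ⟨Ideal.span {s}, by rwa [Ideal.span_singleton_le_iff_mem], ?_, s, hs, ?_⟩
  · have e : D ≃ₗ[D] ↥(Ideal.span {s} : Ideal D) := by
      have := LinearEquiv.toSpanNonzeroSingleton D D s hs
      exact this
    exact Module.finitePresentation_of_free_of_surjective e.toLinearMap e.surjective
      (by rw [LinearMap.ker_eq_bot.mpr e.injective]; exact Submodule.fg_bot)
  · intro x _
    exact Ideal.mul_mem_right x _ (Ideal.mem_span_singleton_self s)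
end

section
/- Let R = ℤ(+)(ℤ/2ℤ)^(ℕ) be the trivial (Nagata idealization) extension and S = {(2,0)ⁿ : n ≥ 0}. Then R is an S-Noetherian ring: for every ideal I of R, the ideal (2,0)·I is finitely generated (in fact principal). -/
open Function LinearMap

noncomputable instance : Module ℤᵐᵒᵖ (ℕ →₀ ZMod 2) :=
  Module.compHom _ ((RingEquiv.toOpposite ℤ).symm : ℤᵐᵒᵖ →+* ℤ)

instance : IsCentralScalar ℤ (ℕ →₀ ZMod 2) := ⟨fun _ _ => rfl⟩


lemma two_smul_zmod2 (b : ℕ →₀ ZMod 2) : (2 : ℤ) • b = 0 := by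
  rw [← Int.cast_smul_eq_zsmul (ZMod 2)]
  have : ((2 : ℤ) : ZMod 2) = 0 := rfl
  rw [this, zero_smul]

lemma key (I : Ideal (TrivSqZeroExt ℤ (ℕ →₀ ZMod 2))) :
    ∃ a ∈ I, ∀ x ∈ I, (2 : TrivSqZeroExt ℤ (ℕ →₀ ZMod 2)) * x ∈ Ideal.span {a} := by
  set R := TrivSqZeroExt ℤ (ℕ →₀ ZMod 2)
  set f : R →+* ℤ := (TrivSqZeroExt.fstHom ℤ ℤ (ℕ →₀ ZMod 2)).toRingHom
  have hfs : Function.Surjective f := fun n => ⟨TrivSqZeroExt.inl n, rfl⟩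
  set J : Ideal ℤ := I.map f
  obtain ⟨n, hn⟩ : J.IsPrincipal := inferInstance
  have hnJ : n ∈ J := hn ▸ Ideal.subset_span rfl
  obtain ⟨a, haI, hfa⟩ := (Ideal.mem_map_iff_of_surjective f hfs).1 hnJ
  refine ⟨a, haI, fun x hx => ?_⟩
  have hfx : f x ∈ J := Ideal.mem_map_of_mem f hx
  rw [hn, Submodule.mem_span_singleton] at hfx
  obtain ⟨k, hk⟩ := hfx
  rw [smul_eq_mul] at hk
  rw [Ideal.mem_span_singleton]
  refine ⟨TrivSqZeroExt.inl (2 * k), ?_⟩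
  have h2f : (2 : R).fst = (2 : ℤ) := rfl
  have h2s : (2 : R).snd = 0 := rfl
  refine TrivSqZeroExt.ext ?_ ?_
  · show (2 : R).fst * x.fst = a.fst * (2 * k)
    have hfa' : a.fst = n := hfa
    have hfx' : x.fst = k * n := hk.symm
    rw [h2f, hfa', hfx']; ring
  · show (2 : R).fst • x.snd + MulOpposite.op x.fst • (2 : R).snd
        = a.fst • (TrivSqZeroExt.inl (2 * k) : R).snd + MulOpposite.op (2 * k) • a.snd
    have h1 : MulOpposite.op (2 * k) • a.snd = (2 * k) • a.snd := rfl
    have h2 : (TrivSqZeroExt.inl (2 * k) : R).snd = 0 := rfl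
    rw [h2f, h2s, h1, h2, two_smul_zmod2, mul_comm, mul_smul, two_smul_zmod2]
    simp

/-- Let `R = ℤ(+)(ℤ/2ℤ)^(ℕ)` be the trivial extension and `S = {(2,0)ⁿ}`. Then for
every ideal `I` the ideal `(2,0)·I` is contained in a principal sub-ideal of `I`
(in fact `(2,0)·I` is principal), and `R` is S-Noetherian. -/
theorem stmt14 :
    (∀ I : Ideal (TrivSqZeroExt ℤ (ℕ →₀ ZMod 2)),
      ∃ a ∈ I, ∀ x ∈ I, (2 : TrivSqZeroExt ℤ (ℕ →₀ ZMod 2)) * x ∈ Ideal.span {a}) ∧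
    (∀ I : Ideal (TrivSqZeroExt ℤ (ℕ →₀ ZMod 2)),
      SFiniteIdeal (TrivSqZeroExt ℤ (ℕ →₀ ZMod 2))
        (Submonoid.powers (2 : TrivSqZeroExt ℤ (ℕ →₀ ZMod 2))) I) := by
  refine ⟨key, fun I => ?_⟩
  obtain ⟨a, haI, h⟩ := key I
  exact ⟨Ideal.span {a}, ⟨{a}, by simp⟩,
    (Ideal.span_le).2 (Set.singleton_subset_iff.2 haI),
    2, ⟨1, pow_one 2⟩, h⟩
end

section
/- If R is an S-coherent ring, I is a finitely generated ideal of R, and a ∈ R, then the quotient ideal (I :_R a) is S-finite and the module (I + Ra)/I is S-finitely presented. -/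
open Function LinearMap

/-- From any S-finite presentation, every surjection from a f.g. free module has
S-finite kernel (Schanuel-type argument). -/
private lemma ker_dom {R : Type*} [CommRing R] (S : Submonoid R)
    {M : Type*} [AddCommGroup M] [Module R M]
    (hM : SFinitePres R S M) {k : ℕ} (f : (Fin k → R) →ₗ[R] M)
    (hf : Function.Surjective f) :
    ∃ K : Submodule R (Fin k → R), K.FG ∧ K ≤ LinearMap.ker f ∧
      ∃ s ∈ S, ∀ x ∈ LinearMap.ker f, s • x ∈ K := by
  obtain ⟨n, g, hg, K₀, hfg, hle, s, hsS, hdom⟩ := hM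
  set bk := Pi.basisFun R (Fin k) with hbk
  set bn := Pi.basisFun R (Fin n) with hbn
  let h : (Fin k → R) →ₗ[R] (Fin n → R) := bk.constr ℕ fun i => Classical.choose (hg (f (bk i)))
  have hgh : ∀ x, g (h x) = f x := by
    suffices hc : g.comp h = f by intro x; rw [← hc]; rfl
    apply bk.ext
    intro i
    simp only [LinearMap.comp_apply, h, Module.Basis.constr_basis]
    exact Classical.choose_spec (hg (f (bk i)))
  let u : (Fin n → R) →ₗ[R] (Fin k → R) := bn.constr ℕ fun i => Classical.choose (hf (g (bn i)))
  have hfu : ∀ y, f (u y) = g y := by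
    suffices hc : f.comp u = g by intro y; rw [← hc]; rfl
    apply bn.ext
    intro i
    simp only [LinearMap.comp_apply, u, Module.Basis.constr_basis]
    exact Classical.choose_spec (hf (g (bn i)))
  set d : (Fin k → R) →ₗ[R] (Fin k → R) := LinearMap.id - u.comp h with hd
  refine ⟨LinearMap.range d ⊔ Submodule.map u K₀, ?_, ?_, s, hsS, ?_⟩
  · refine Submodule.FG.sup ?_ (hfg.map u)
    rw [LinearMap.range_eq_map]
    exact Submodule.FG.map _ Module.Finite.fg_top
  · refine sup_le ?_ ?_
    · rintro _ ⟨y, rfl⟩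
      simp only [LinearMap.mem_ker, hd, LinearMap.sub_apply, LinearMap.id_apply,
        LinearMap.comp_apply, map_sub, hfu, hgh, sub_self]
    · rintro _ ⟨y, hy, rfl⟩
      simp only [LinearMap.mem_ker, hfu]
      exact hle hy
  · intro x hx
    have hxg : h x ∈ LinearMap.ker g := by
      simp only [LinearMap.mem_ker, hgh]
      exact hx
    have h1 : d (s • x) ∈ LinearMap.range d := ⟨s • x, rfl⟩
    have h2 : u (s • h x) ∈ Submodule.map u K₀ :=
      ⟨s • h x, hdom _ hxg, rfl⟩
    have key : s • x = d (s • x) + u (s • h x) := by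
      simp only [hd, LinearMap.sub_apply, LinearMap.id_apply, LinearMap.comp_apply,
        map_smul]
      module
    rw [key]
    exact Submodule.add_mem_sup h1 h2

/-- If `R` is S-coherent, `I` a finitely generated ideal and `a ∈ R`, then
`(I :_R a)` is S-finite and `(I + Ra)/I` is S-finitely presented. -/
theorem stmt17 {R : Type*} [CommRing R] (S : Submonoid R)
    (h : SCoherentRing R S) (I : Ideal R) (hI : I.FG) (a : R) :
    SFiniteIdeal R S (I.colon (Ideal.span {a})) ∧
    SFinitePres R S ↥(Submodule.map I.mkQ (I ⊔ Ideal.span {a})) := by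
  obtain ⟨m, v, hv⟩ := Submodule.fg_iff_exists_fin_generating_family.mp hI
  set J : Ideal R := I ⊔ Ideal.span {a} with hJdef
  set w : Fin (m + 1) → R := Fin.snoc v a with hw
  have hwspan : Submodule.span R (Set.range w) = (J : Submodule R R) := by
    apply le_antisymm
    · rw [Submodule.span_le]
      rintro _ ⟨i, rfl⟩
      induction i using Fin.lastCases with
      | last =>
        rw [hw, Fin.snoc_last]
        exact Submodule.mem_sup_right (Ideal.subset_span rfl)
      | cast j =>
        rw [hw, Fin.snoc_castSucc]
        exact Submodule.mem_sup_left (hv ▸ Submodule.subset_span ⟨j, rfl⟩)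
    · rw [hJdef]
      apply sup_le
      · rw [← hv, Submodule.span_le]
        rintro _ ⟨j, rfl⟩
        exact Submodule.subset_span ⟨j.castSucc, by rw [hw, Fin.snoc_castSucc]⟩
      · rw [Ideal.span, Submodule.span_le]
        rintro _ rfl
        exact Submodule.subset_span ⟨Fin.last m, by rw [hw, Fin.snoc_last]⟩
  set φ : (Fin (m + 1) → R) →ₗ[R] R := Fintype.linearCombination R w with hφ
  have hφrange : ∀ x, φ x ∈ J := by
    intro x
    have : φ x ∈ LinearMap.range φ := ⟨x, rfl⟩
    rwa [hφ, Fintype.range_linearCombination, hwspan] at this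
  set f : (Fin (m + 1) → R) →ₗ[R] ↥J := φ.codRestrict (J : Submodule R R) hφrange with hf
  have hfs : Function.Surjective f := by
    rintro ⟨y, hy⟩
    have : y ∈ LinearMap.range φ := by
      rw [hφ, Fintype.range_linearCombination, hwspan]; exact hy
    obtain ⟨x, hx⟩ := this
    exact ⟨x, Subtype.ext hx⟩
  have hkerf : LinearMap.ker f = LinearMap.ker φ := LinearMap.ker_codRestrict _ _ _
  have hJfg : J.FG := Submodule.FG.sup hI (Submodule.fg_span_singleton a)
  obtain ⟨K, hKfg, hKle, s, hsS, hKdom⟩ := ker_dom S (h J hJfg) f hfs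
  set π : (Fin (m + 1) → R) →ₗ[R] R := LinearMap.proj (Fin.last m) with hπ
  have hφapp : ∀ x : Fin (m + 1) → R,
      φ x = (∑ i : Fin m, x i.castSucc * v i) + x (Fin.last m) * a := by
    intro x
    rw [hφ, Fintype.linearCombination_apply, Fin.sum_univ_castSucc]
    simp [hw, Fin.snoc_castSucc, Fin.snoc_last]
  have hcol : (I.colon (Ideal.span {a}) : Submodule R R) =
      Submodule.map π (LinearMap.ker φ) := by
    ext r
    constructor
    · intro hr
      rw [Ideal.mem_colon_span_singleton] at hr
      rw [← hv] at hr
      rw [← Fintype.range_linearCombination R v] at hr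
      obtain ⟨c, hc⟩ := hr
      refine Submodule.mem_map.mpr ⟨Fin.snoc (-c) r, ?_, ?_⟩
      · show φ (Fin.snoc (-c) r) = 0
        rw [hφapp]
        simp only [Fin.snoc_castSucc, Fin.snoc_last, Pi.neg_apply, neg_mul]
        rw [Fintype.linearCombination_apply] at hc
        simp only [smul_eq_mul] at hc
        rw [Finset.sum_neg_distrib, hc]
        ring
      · simp [hπ, Fin.snoc_last]
    · rintro ⟨x, hx, rfl⟩
      have hx2 : φ x = 0 := hx
      rw [hφapp] at hx2
      rw [Ideal.mem_colon_span_singleton]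
      have : (π x) * a = -(∑ i : Fin m, x i.castSucc * v i) := by
        simp only [hπ, LinearMap.proj_apply]
        linear_combination hx2
      rw [this]
      refine neg_mem (Ideal.sum_mem I fun i _ => Ideal.mul_mem_left I _ ?_)
      rw [← hv]
      exact Submodule.subset_span ⟨i, rfl⟩
  have part1 : SFiniteIdeal R S (I.colon (Ideal.span {a})) := by
    refine ⟨Submodule.map π K, hKfg.map π, ?_, s, hsS, ?_⟩
    · rw [hcol]
      exact Submodule.map_mono (hkerf ▸ hKle)
    · intro x hx
      rw [hcol] at hx
      obtain ⟨y, hy, rfl⟩ := hx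
      refine ⟨s • y, hKdom y (hkerf ▸ hy), ?_⟩
      simp [map_smul, smul_eq_mul]
  refine ⟨part1, ?_⟩
  obtain ⟨J', hJ'fg, hJ'le, t, htS, htdom⟩ := part1
  have haJ : a ∈ J := Submodule.mem_sup_right (Ideal.subset_span rfl)
  set M := ↥(Submodule.map I.mkQ J) with hM
  set e : M := ⟨I.mkQ a, Submodule.mem_map_of_mem haJ⟩ with he
  set g : (Fin 1 → R) →ₗ[R] M :=
    (LinearMap.toSpanSingleton R M e).comp (LinearMap.proj 0) with hg
  have hgapp : ∀ x : Fin 1 → R, g x = x 0 • e := fun x => rfl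
  have hker : ∀ x : Fin 1 → R, x ∈ LinearMap.ker g ↔ x 0 ∈ I.colon (Ideal.span {a}) := by
    intro x
    rw [LinearMap.mem_ker, hgapp, Ideal.mem_colon_span_singleton]
    constructor
    · intro hx
      have : x 0 • I.mkQ a = 0 := congrArg Subtype.val hx
      rw [← map_smul, smul_eq_mul] at this
      rwa [← Submodule.Quotient.mk_eq_zero I, ← Submodule.mkQ_apply]
    · intro hx
      apply Subtype.ext
      show x 0 • I.mkQ a = 0
      rw [← map_smul, smul_eq_mul]
      rw [Submodule.mkQ_apply, Submodule.Quotient.mk_eq_zero]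
      exact hx
  have hgs : Function.Surjective g := by
    rintro ⟨z, hz⟩
    obtain ⟨y, hy, rfl⟩ := hz
    have hy2 : y ∈ I ⊔ Ideal.span {a} := hy
    rw [Submodule.mem_sup] at hy2
    obtain ⟨i, hi, z', hz', rfl⟩ := hy2
    obtain ⟨c, rfl⟩ := Ideal.mem_span_singleton'.mp hz'
    refine ⟨fun _ => c, ?_⟩
    rw [hgapp]
    apply Subtype.ext
    show c • I.mkQ a = I.mkQ (i + c * a)
    rw [map_add, ← map_smul, smul_eq_mul]
    have : I.mkQ i = 0 := by
      rw [Submodule.mkQ_apply, Submodule.Quotient.mk_eq_zero]; exact hi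
    rw [this, zero_add]
  set ι : R →ₗ[R] (Fin 1 → R) := LinearMap.pi fun _ => LinearMap.id with hι
  refine ⟨1, g, hgs, Submodule.map ι J', Submodule.FG.map ι hJ'fg, ?_, t, htS, ?_⟩
  · rintro _ ⟨r, hr, rfl⟩
    rw [LinearMap.mem_ker]
    have : (ι r) 0 = r := rfl
    rw [hgapp, this]
    apply Subtype.ext
    show r • I.mkQ a = 0
    rw [← map_smul, smul_eq_mul, Submodule.mkQ_apply, Submodule.Quotient.mk_eq_zero]
    exact Ideal.mem_colon_span_singleton.mp (hJ'le hr)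
  · intro x hx
    have hx0 : x 0 ∈ I.colon (Ideal.span {a}) := (hker x).mp hx
    refine ⟨t * x 0, htdom _ hx0, ?_⟩
    funext i
    have : i = 0 := Subsingleton.elim i 0
    subst this
    rfl
end

section
/- If M is a finitely generated R-module that is c-S-finitely presented, then M is u-S-finitely presented; in particular there exist s ∈ S, a finitely presented module F, and a map f : F → M with s • ker f = 0 and s • coker f = 0. -/
open Function LinearMap

/-- A finitely generated c-S-finitely presented module is u-S-finitely presented:
there are `s ∈ S`, a finitely presented module `F` (presented as `Rⁿ/K` with `K`
finitely generated) and `f : F →ₗ[R] M` with `s • ker f = 0` and `s • coker f = 0`. -/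
theorem stmt18 {R : Type*} [CommRing R] (S : Submonoid R)
    {M : Type*} [AddCommGroup M] [Module R M]
    (hfg : Module.Finite R M) (hc : CSFinitePresMod R S M) :
    ∃ s ∈ S, ∃ (n : ℕ) (K : Submodule R (Fin n → R)), K.FG ∧
      ∃ f : ((Fin n → R) ⧸ K) →ₗ[R] M,
        (∀ x ∈ LinearMap.ker f, s • x = 0) ∧
        (∀ y : M ⧸ LinearMap.range f, s • y = 0) := by
  obtain ⟨N, hNfp, s, hsS, hsm⟩ := hc
  obtain ⟨n, p, hp⟩ := Module.Finite.exists_fin' R ↥N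
  refine ⟨s, hsS, n, LinearMap.ker p, Module.FinitePresentation.fg_ker p hp, ?_⟩
  set g : ((Fin n → R) ⧸ LinearMap.ker p) →ₗ[R] ↥N :=
    (LinearMap.ker p).liftQ p le_rfl with hg
  have hginj : Function.Injective g := by
    rw [← LinearMap.ker_eq_bot, hg, Submodule.ker_liftQ_eq_bot _ _ _ le_rfl]
  refine ⟨N.subtype ∘ₗ g, ?_, ?_⟩
  · intro x hx
    have : g x = 0 := Subtype.ext (by simpa using hx)
    have : x = 0 := hginj (by simpa using this)
    simp [this]
  · intro y
    obtain ⟨m, rfl⟩ := Submodule.Quotient.mk_surjective _ y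
    rw [← Submodule.Quotient.mk_smul, Submodule.Quotient.mk_eq_zero]
    have hgsurj : Function.Surjective g := by
      intro x
      obtain ⟨z, hz⟩ := hp x
      exact ⟨Submodule.Quotient.mk z, hz⟩
    obtain ⟨z, hz⟩ := hgsurj ⟨s • m, hsm m⟩
    exact ⟨z, by simp [hz]⟩
end

section
/- Let R be a commutative ring, S a multiplicative set, M a finitely presented R-module, and L a finitely generated submodule of M. If every finitely generated submodule of every finitely generated free R-module is S-finitely presented, then L is S-finitely presented. -/
open Function LinearMap

/-- If every finitely generated submodule of every finitely generated free module is
S-finitely presented, then every finitely generated submodule `L` of a finitely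
presented module `M` is S-finitely presented. -/
theorem stmt19 {R : Type*} [CommRing R] (S : Submonoid R)
    {M : Type*} [AddCommGroup M] [Module R M]
    (hM : Module.FinitePresentation R M) (L : Submodule R M) (hL : L.FG)
    (h : ∀ (n : ℕ) (N : Submodule R (Fin n → R)), N.FG → SFinitePres R S ↥N) :
    SFinitePres R S ↥L := by
  classical
  obtain ⟨n, f, hf⟩ := Module.Finite.exists_fin' R M
  have hker : (LinearMap.ker f).FG := Module.FinitePresentation.fg_ker f hf
  set L' := L.comap f with hL'def
  have hkerle : LinearMap.ker f ≤ L' := fun x hx => by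
    simp only [hL'def, Submodule.mem_comap, LinearMap.mem_ker.mp hx]
    exact L.zero_mem
  have hmap : L'.map f = L := Submodule.map_comap_eq_of_surjective hf L
  have hL'fg : L'.FG := by
    apply Submodule.fg_of_fg_map_of_fg_inf_ker f
    · rw [hmap]; exact hL
    · rwa [inf_eq_right.mpr hkerle]
  obtain ⟨m, g, hg, K₀, hK₀fg, hK₀le, s, hs, hsK⟩ := h n L' hL'fg
  let p : ↥L' →ₗ[R] ↥L := f.restrict (fun x hx => hx)
  have hp : ∀ x : ↥L', (p x : M) = f x := fun x => rfl
  have hpsurj : Function.Surjective p := by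
    rintro ⟨y, hy⟩
    obtain ⟨x, rfl⟩ := hf y
    exact ⟨⟨x, hy⟩, Subtype.ext rfl⟩
  -- P = kernel of p as a submodule of L'
  set P : Submodule R ↥L' := (LinearMap.ker f).comap L'.subtype with hPdef
  have hPker : ∀ x : ↥L', p x = 0 ↔ x ∈ P := by
    intro x
    constructor
    · intro hx
      simp only [hPdef, Submodule.mem_comap, LinearMap.mem_ker, Submodule.coe_subtype]
      exact (hp x) ▸ congrArg Subtype.val hx
    · intro hx
      apply Subtype.ext
      simpa only [hPdef, Submodule.mem_comap, LinearMap.mem_ker, Submodule.coe_subtype, hp, ZeroMemClass.coe_zero, Submodule.coe_zero] using hx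
  have hPfg : P.FG := by
    apply Submodule.fg_of_fg_map_injective L'.subtype Subtype.val_injective
    rwa [Submodule.map_comap_subtype, inf_eq_right.mpr hkerle]
  obtain ⟨z, hz⟩ := hPfg
  obtain ⟨y, hy⟩ := hg.hasRightInverse
  set K₁ : Submodule R (Fin m → R) := K₀ ⊔ Submodule.span R (y '' z) with hK₁def
  have hK₁fg : K₁.FG := hK₀fg.sup (Submodule.fg_span ((z.finite_toSet).image y))
  refine ⟨m, p ∘ₗ g, ?_, K₁, hK₁fg, ?_, s, hs, ?_⟩
  · rw [LinearMap.coe_comp]; exact hpsurj.comp hg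
  · refine sup_le (le_trans hK₀le (LinearMap.ker_le_ker_comp g p)) ?_
    rw [Submodule.span_le]
    rintro _ ⟨a, ha, rfl⟩
    simp only [SetLike.mem_coe, LinearMap.mem_ker, LinearMap.comp_apply, hy a]
    exact (hPker a).mpr (hz ▸ Submodule.subset_span ha)
  · intro x hx
    have hgx : g x ∈ P := by
      rw [← hPker]
      simpa only [LinearMap.mem_ker, LinearMap.comp_apply] using hx
    have himg : (Submodule.span R (y '' ↑z)).map g = P := by
      rw [Submodule.map_span, Set.image_image, Set.image_congr' (fun a => hy a), Set.image_id', hz]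
    have : g x ∈ (Submodule.span R (y '' ↑z)).map g := himg.symm ▸ hgx
    obtain ⟨w, hw, hgw⟩ := this
    have hxw : x - w ∈ LinearMap.ker g := by
      rw [LinearMap.mem_ker, map_sub, hgw, sub_self]
    have h1 : s • (x - w) ∈ K₀ := hsK _ hxw
    have h2 : s • w ∈ Submodule.span R (y '' z) := Submodule.smul_mem _ _ hw
    have : s • x = s • (x - w) + s • w := by rw [smul_sub, sub_add_cancel]
    rw [this]
    exact Submodule.add_mem _ (Submodule.mem_sup_left h1) (Submodule.mem_sup_right h2)
end
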